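/- arXiv:2504.08178 — 12 statements merged into one kernel-verified Lean document; each statement's English description precedes it below -/
import Mathlib

section
/- For all real x ≥ 1 and k ∈ [1,2), exp(k·x^{2-k}/(2-k)) − (1 − k/2)·exp(k/(2−k)) ≥ (k/2)·exp(k/(2−k))·x². -/
open Real

theorem stmt_0 (k x : ℝ) (hk1 : 1 ≤ k) (hk2 : k < 2) (hx : 1 ≤ x) :
    (k / 2) * Real.exp (k / (2 - k)) * x ^ 2 ≤
      Real.exp (k * x ^ (2 - k) / (2 - k)) - (1 - k / 2) * Real.exp (k / (2 - k)) := by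
  have ha : (0:ℝ) < 2 - k := by linarith
  have hk0 : (0:ℝ) ≤ k := by linarith
  set a : ℝ := 2 - k with ha_def
  set f : ℝ → ℝ := fun y =>
    Real.exp (k * y ^ a / a) - (k / 2) * Real.exp (k / a) * y ^ 2
      - (1 - k / 2) * Real.exp (k / a) with hf_def
  have hf1 : f 1 = 0 := by
    simp [hf_def, Real.one_rpow]
    ring
  have hmono : MonotoneOn f (Set.Ici (1:ℝ)) := by
    have hderiv : ∀ y : ℝ, 0 < y → HasDerivAt f
        (Real.exp (k * y ^ a / a) * (k * (a * y ^ (a - 1)) / a)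
          - (k / 2) * Real.exp (k / a) * (2 * y)) y := by
      intro y hy
      have h1 : HasDerivAt (fun z : ℝ => z ^ a) (a * y ^ (a - 1)) y :=
        Real.hasDerivAt_rpow_const (Or.inl hy.ne')
      have h2 : HasDerivAt (fun z : ℝ => k * z ^ a / a)
          (k * (a * y ^ (a - 1)) / a) y := (h1.const_mul k).div_const a
      have h3 := h2.exp
      have h4 : HasDerivAt (fun z : ℝ => (k / 2) * Real.exp (k / a) * z ^ 2)
          ((k / 2) * Real.exp (k / a) * (2 * y)) y := by
        have := (hasDerivAt_pow 2 y).const_mul ((k / 2) * Real.exp (k / a))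
        simpa using this
      simpa [hf_def] using (h3.sub h4).sub_const ((1 - k / 2) * Real.exp (k / a))
    apply monotoneOn_of_deriv_nonneg (convex_Ici 1)
    · intro y hy
      exact ((hderiv y (lt_of_lt_of_le zero_lt_one hy)).differentiableAt).continuousAt.continuousWithinAt
    · intro y hy
      rw [interior_Ici] at hy
      exact ((hderiv y (lt_trans zero_lt_one hy)).differentiableAt).differentiableWithinAt
    · intro y hy
      rw [interior_Ici] at hy
      have hy0 : 0 < y := lt_trans zero_lt_one hy
      rw [(hderiv y hy0).deriv]
      have key : Real.exp (k / a) * y ^ k ≤ Real.exp (k * y ^ a / a) := by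
        have hlog : 0 ≤ Real.log y := Real.log_nonneg hy.le
        have h1 : a * Real.log y + 1 ≤ y ^ a := by
          rw [Real.rpow_def_of_pos hy0]
          have := Real.add_one_le_exp (Real.log y * a)
          linarith [this]
        have h2 : k / a + k * Real.log y ≤ k * y ^ a / a := by
          rw [div_add' _ _ _ ha.ne', div_le_div_iff₀ ha ha]
          nlinarith [mul_le_mul_of_nonneg_left h1 hk0]
        calc Real.exp (k / a) * y ^ k
            = Real.exp (k / a + k * Real.log y) := by
              rw [Real.exp_add, Real.rpow_def_of_pos hy0, mul_comm (Real.log y) k]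
          _ ≤ Real.exp (k * y ^ a / a) := Real.exp_le_exp.mpr h2
      have hpow : y ^ (a - 1) * y ^ k = y := by
        rw [← Real.rpow_add hy0]
        have : a - 1 + k = 1 := by rw [ha_def]; ring
        rw [this, Real.rpow_one]
      have hpos : (0:ℝ) ≤ y ^ (a - 1) := (Real.rpow_pos_of_pos hy0 _).le
      have := mul_le_mul_of_nonneg_left key (mul_nonneg hk0 hpos)
      have hsimp : k * (a * y ^ (a - 1)) / a = k * y ^ (a - 1) := by
        field_simp
      rw [hsimp]
      have h5 : k * Real.exp (k / a) * y ≤ k * y ^ (a - 1) * Real.exp (k * y ^ a / a) := by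
        calc k * Real.exp (k / a) * y
            = k * y ^ (a - 1) * (Real.exp (k / a) * y ^ k) := by
              rw [show k * y ^ (a - 1) * (Real.exp (k / a) * y ^ k)
                    = k * Real.exp (k / a) * (y ^ (a - 1) * y ^ k) by ring, hpow]
          _ ≤ _ := this
      linarith
  have := hmono (Set.self_mem_Ici) (Set.mem_Ici.mpr hx) hx
  rw [hf1] at this
  have h2 : 0 ≤ Real.exp (k * x ^ a / a) - (k / 2) * Real.exp (k / a) * x ^ 2
      - (1 - k / 2) * Real.exp (k / a) := by simpa [hf_def] using this
  linarith
end

section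
/- Let k ∈ [1,2), Δ > 0, θ* ∈ ℝ^d, and define V_{k,0}(θ) = exp(k‖θ−θ*‖^{2−k}/((2−k)Δ^{2−k})) − (1 − k/2)·exp(k/(2−k)) if ‖θ−θ*‖ > Δ, and V_{k,0}(θ) = k·exp(k/(2−k))·‖θ−θ*‖²/(2Δ²) if ‖θ−θ*‖ ≤ Δ. Then V_{k,0}(θ) ≥ k·exp(k/(2−k))·‖θ−θ*‖²/(2Δ²) for all θ ∈ ℝ^d. -/
open Real

lemma aux_mono (k : ℝ) (hk1 : 1 ≤ k) (hk2 : k < 2) {t : ℝ} (ht : 1 ≤ t) :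
    Real.exp (k / (2 - k)) * (k / 2 * t ^ 2 + (1 - k / 2)) ≤
      Real.exp (k / (2 - k) * t ^ (2 - k)) := by
  set α : ℝ := 2 - k with hαdef
  have hα : 0 < α := by simp [hαdef]; linarith
  have hk0 : 0 < k := by linarith
  set a : ℝ := k / α with hadef
  have ha : 0 < a := div_pos hk0 hα
  have haα : a * α = k := div_mul_cancel₀ k hα.ne'
  set f : ℝ → ℝ := fun x => Real.exp (a * x ^ α) - Real.exp a * (k / 2 * x ^ 2 + (1 - k / 2))
    with hfdef
  have hd : ∀ x : ℝ, 0 < x → HasDerivAt f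
      (Real.exp (a * x ^ α) * (a * (α * x ^ (α - 1))) - Real.exp a * (k / 2 * (2 * x ^ 1))) x := by
    intro x hx
    have h1 : HasDerivAt (fun x : ℝ => x ^ α) (α * x ^ (α - 1)) x :=
      Real.hasDerivAt_rpow_const (Or.inl hx.ne')
    have h2 := ((h1.const_mul a).exp)
    have h3 : HasDerivAt (fun x : ℝ => Real.exp a * (k / 2 * x ^ 2 + (1 - k / 2)))
        (Real.exp a * (k / 2 * (2 * x ^ 1))) x := by
      have := (((hasDerivAt_pow 2 x).const_mul (k / 2)).add_const (1 - k / 2)).const_mul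
        (Real.exp a)
      exact this.congr_deriv (by norm_num)
    exact (h2.sub h3)
  have hc : ContinuousOn f (Set.Ici 1) := by
    intro x hx
    have hx0 : x ≠ 0 := by have : (1:ℝ) ≤ x := hx; positivity
    exact ((hd x (by have : (1:ℝ) ≤ x := hx; linarith)).continuousAt).continuousWithinAt
  have hderiv_nonneg : ∀ x : ℝ, 1 < x →
      0 ≤ Real.exp (a * x ^ α) * (a * (α * x ^ (α - 1))) - Real.exp a * (k / 2 * (2 * x ^ 1)) := by
    intro x hx
    have hx0 : 0 < x := by linarith
    have hlog : 0 ≤ Real.log x := Real.log_nonneg hx.le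
    have h1 : 1 + α * Real.log x ≤ x ^ α := by
      have h := Real.add_one_le_exp (α * Real.log x)
      rw [Real.rpow_def_of_pos hx0, mul_comm (Real.log x) α]
      linarith
    have h2 : a + k * Real.log x ≤ a * x ^ α := by
      have := mul_le_mul_of_nonneg_left h1 ha.le
      calc a + k * Real.log x = a * (1 + α * Real.log x) := by rw [mul_add, mul_one, ← mul_assoc, haα]
        _ ≤ a * x ^ α := this
    have h3 : Real.exp a * x ^ (k : ℝ) ≤ Real.exp (a * x ^ α) := by
      have h := Real.exp_le_exp.mpr h2
      rw [Real.exp_add] at h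
      calc Real.exp a * x ^ (k : ℝ) = Real.exp a * Real.exp (k * Real.log x) := by
            rw [Real.rpow_def_of_pos hx0, mul_comm (Real.log x) k]
        _ ≤ Real.exp (a * x ^ α) := h
    have hxa1 : (0:ℝ) < x ^ (α - 1) := Real.rpow_pos_of_pos hx0 _
    have hkey : Real.exp a * x ≤ Real.exp (a * x ^ α) * x ^ (α - 1) := by
      have h4 : x ^ (α - 1) * x ^ (k:ℝ) = x := by
        rw [← Real.rpow_add hx0]
        have : α - 1 + k = 1 := by simp [hαdef]; ring
        rw [this, Real.rpow_one]
      calc Real.exp a * x = x ^ (α - 1) * (Real.exp a * x ^ (k:ℝ)) := by rw [← mul_assoc,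
            mul_comm (x ^ (α-1)) (Real.exp a), mul_assoc, h4]
        _ ≤ x ^ (α - 1) * Real.exp (a * x ^ α) := by
            exact mul_le_mul_of_nonneg_left h3 hxa1.le
        _ = Real.exp (a * x ^ α) * x ^ (α - 1) := by ring
    have : Real.exp a * (k / 2 * (2 * x ^ 1)) = k * (Real.exp a * x) := by ring
    rw [this, sub_nonneg]
    calc k * (Real.exp a * x) ≤ k * (Real.exp (a * x ^ α) * x ^ (α - 1)) :=
          mul_le_mul_of_nonneg_left hkey hk0.le
      _ = Real.exp (a * x ^ α) * (a * (α * x ^ (α - 1))) := by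
          rw [← mul_assoc a α, haα]; ring
  have hmono : MonotoneOn f (Set.Ici 1) := by
    apply monotoneOn_of_deriv_nonneg (convex_Ici 1) hc
    · rw [interior_Ici]
      intro x hx
      exact (hd x (by exact lt_trans zero_lt_one hx)).differentiableAt.differentiableWithinAt
    · rw [interior_Ici]
      intro x hx
      rw [(hd x (lt_trans zero_lt_one hx)).deriv]
      exact hderiv_nonneg x hx
  have h1mem : (1:ℝ) ∈ Set.Ici (1:ℝ) := Set.mem_Ici.mpr le_rfl
  have htmem : t ∈ Set.Ici (1:ℝ) := Set.mem_Ici.mpr ht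
  have := hmono h1mem htmem ht
  have hf1 : f 1 = 0 := by
    simp [hfdef, Real.one_rpow]
  rw [hf1] at this
  have : Real.exp a * (k / 2 * t ^ 2 + (1 - k / 2)) ≤ Real.exp (a * t ^ α) := by
    have h := this
    simp only [hfdef] at h
    linarith
  exact this

theorem stmt_2 (d : ℕ) (k Δ : ℝ) (hk1 : 1 ≤ k) (hk2 : k < 2) (hΔ : 0 < Δ)
    (θs θ : EuclideanSpace ℝ (Fin d)) :
    k * Real.exp (k / (2 - k)) * ‖θ - θs‖ ^ 2 / (2 * Δ ^ 2) ≤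
      (if Δ < ‖θ - θs‖ then
        Real.exp (k * ‖θ - θs‖ ^ (2 - k) / ((2 - k) * Δ ^ (2 - k)))
          - (1 - k / 2) * Real.exp (k / (2 - k))
      else k * Real.exp (k / (2 - k)) * ‖θ - θs‖ ^ 2 / (2 * Δ ^ 2)) := by
  set r : ℝ := ‖θ - θs‖ with hrdef
  split_ifs with h
  · have hr0 : 0 < r := lt_trans hΔ h
    have ht : 1 ≤ r / Δ := le_of_lt ((one_lt_div hΔ).mpr h)
    have key := aux_mono k hk1 hk2 ht
    have hα : (0:ℝ) < 2 - k := by linarith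
    have hΔα : (0:ℝ) < Δ ^ (2 - k) := Real.rpow_pos_of_pos hΔ _
    have hdiv : (r / Δ) ^ (2 - k) = r ^ (2 - k) / Δ ^ (2 - k) :=
      Real.div_rpow hr0.le hΔ.le (2 - k)
    have harg : k / (2 - k) * (r / Δ) ^ (2 - k) = k * r ^ (2 - k) / ((2 - k) * Δ ^ (2 - k)) := by
      rw [hdiv]; field_simp
    rw [harg] at key
    have hsq : (r / Δ) ^ 2 = r ^ 2 / Δ ^ 2 := div_pow r Δ 2
    rw [hsq] at key
    have hΔ2 : (0:ℝ) < Δ ^ 2 := by positivity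
    have heq : Real.exp (k / (2 - k)) * (k / 2 * (r ^ 2 / Δ ^ 2) + (1 - k / 2)) =
        k * Real.exp (k / (2 - k)) * r ^ 2 / (2 * Δ ^ 2) + (1 - k / 2) * Real.exp (k / (2 - k)) := by
      field_simp
    rw [heq] at key
    linarith
  · exact le_rfl
end

section
/- Let f : ℝ^d → ℝ be differentiable with minimizer θ*, and suppose there exist constants a, b, Δ > 0 and k ∈ [1,2) such that ‖∇f(θ)‖ ≤ a‖θ−θ*‖^{k−1} and ⟨θ−θ*, ∇f(θ)⟩ ≥ b‖θ−θ*‖^k for all ‖θ−θ*‖ > Δ. Then for every θ with ‖θ−θ*‖ ≥ Δ and every stepsize 0 ≤ α ≤ min(2bΔ^{2−k}/a², 1/(2aΔ^{k−2})), we have (1/2)‖θ−θ*‖ ≤ ‖θ−θ* − α∇f(θ)‖ ≤ ‖θ−θ*‖. -/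
open Real RealInnerProductSpace Filter

section Aux

variable {E : Type*} [NormedAddCommGroup E] [InnerProductSpace ℝ E] [CompleteSpace E]

lemma aux_line_deriv (f : E → ℝ) (g : E → E) (hgrad : ∀ θ, HasGradientAt f (g θ) θ)
    (θ v : E) (t : ℝ) :
    HasDerivAt (fun s : ℝ => f (θ + s • v)) ⟪g (θ + t • v), v⟫ t := by
  have hline : HasDerivAt (fun s : ℝ => θ + s • v) v t := by
    simpa using (hasDerivAt_id t).smul_const v
  have hf := ((hgrad (θ + t • v)).hasFDerivAt).comp_hasDerivAt t hline
  exact hf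

lemma aux_incr_le (φ φ' : ℝ → ℝ) (hφ : ∀ t, HasDerivAt φ (φ' t) t)
    (c T : ℝ) (hT : 0 < T) (hbound : ∀ t, 0 < t → t ≤ T → φ' t ≤ c) :
    φ T - φ 0 ≤ c * T := by
  have hcont : Continuous φ := by
    rw [continuous_iff_continuousAt]; exact fun t => (hφ t).continuousAt
  have hd : ∀ x : ℝ, HasDerivAt (fun t => c * t - φ t) (c - φ' x) x :=
    fun x => by have h := ((hasDerivAt_id x).const_mul c).sub (hφ x); rw [mul_one] at h; exact h
  have hmono : MonotoneOn (fun t => c * t - φ t) (Set.Icc 0 T) := by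
    apply monotoneOn_of_deriv_nonneg (convex_Icc 0 T)
    · exact ((continuous_const.mul continuous_id).sub hcont).continuousOn
    · intro x hx
      exact ((hd x).differentiableAt).differentiableWithinAt
    · intro x hx
      rw [interior_Icc] at hx
      rw [(hd x).deriv]
      have := hbound x hx.1 hx.2.le
      linarith
  have := hmono (Set.left_mem_Icc.mpr hT.le) (Set.right_mem_Icc.mpr hT.le) hT.le
  simp at this
  linarith

lemma aux_incr_ge (φ φ' : ℝ → ℝ) (hφ : ∀ t, HasDerivAt φ (φ' t) t)
    (c T : ℝ) (hT : 0 < T) (hbound : ∀ t, 0 < t → t ≤ T → c ≤ φ' t) :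
    c * T ≤ φ T - φ 0 := by
  have := aux_incr_le (fun t => -φ t) (fun t => -φ' t) (fun t => (hφ t).neg) (-c) T hT
    (fun t ht1 ht2 => neg_le_neg (hbound t ht1 ht2))
  simp at this
  linarith

lemma aux_deriv_le (φ : ℝ → ℝ) (L : ℝ) (h0 : HasDerivAt φ L 0)
    (D : ℝ → ℝ) (M : ℝ) (hD : Tendsto D (nhdsWithin 0 (Set.Ioi 0)) (nhds M))
    (hle : ∀ T : ℝ, 0 < T → φ T - φ 0 ≤ D T * T) : L ≤ M := by
  have hslope : Tendsto (slope φ 0) (nhdsWithin 0 (Set.Ioi 0)) (nhds L) :=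
    (hasDerivAt_iff_tendsto_slope.mp h0).mono_left
      (nhdsWithin_mono 0 (fun x hx => ne_of_gt hx))
  refine le_of_tendsto_of_tendsto hslope hD ?_
  filter_upwards [eventually_mem_nhdsWithin] with T (hT : T ∈ Set.Ioi 0)
  have hT' : (0:ℝ) < T := hT
  have := hle T hT'
  rw [slope_def_field, sub_zero, div_le_iff₀ hT']
  linarith

lemma aux_deriv_ge (φ : ℝ → ℝ) (L : ℝ) (h0 : HasDerivAt φ L 0)
    (c : ℝ) (hle : ∀ T : ℝ, 0 < T → c * T ≤ φ T - φ 0) : c ≤ L := by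
  have := aux_deriv_le (fun t => -φ t) (-L) h0.neg (fun _ => -c) (-c) tendsto_const_nhds
    (fun T hT => by have := hle T hT; simp; linarith)
  linarith

lemma aux_main (u v : E) (a b Δ k α : ℝ) (ha : 0 < a) (hb : 0 < b) (hΔ : 0 < Δ)
    (hk2 : k < 2) (hr : Δ ≤ ‖u‖)
    (hA : ‖v‖ ≤ a * ‖u‖ ^ (k - 1)) (hB : b * ‖u‖ ^ k ≤ ⟪u, v⟫)
    (hα0 : 0 ≤ α)
    (hα : α ≤ min (2 * b * Δ ^ (2 - k) / a ^ 2) (1 / (2 * a * Δ ^ (k - 2)))) :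
    (1 / 2) * ‖u‖ ≤ ‖u - α • v‖ ∧ ‖u - α • v‖ ≤ ‖u‖ := by
  set r := ‖u‖ with hrdef
  have hr0 : 0 < r := lt_of_lt_of_le hΔ hr
  have hrk1 : (0:ℝ) ≤ r ^ (k - 1) := rpow_nonneg hr0.le _
  have hΔ2k : Δ ^ (2 - k) ≤ r ^ (2 - k) := rpow_le_rpow hΔ.le hr (by linarith)
  have hΔ2kpos : (0:ℝ) < Δ ^ (2 - k) := rpow_pos_of_pos hΔ _
  have e1 : r ^ (k - 1) * r ^ (2 - k) = r := by
    rw [← Real.rpow_add hr0, show k - 1 + (2 - k) = 1 by ring, Real.rpow_one]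
  have e2 : r ^ (2 - k) * (r ^ (k - 1) * r ^ (k - 1)) = r ^ k := by
    rw [← Real.rpow_add hr0, ← Real.rpow_add hr0, show k - 1 + (k - 1) = 2*k-2 by ring,
      show 2 - k + (2*k - 2) = k by ring]
  have hα1 : α ≤ 2 * b * Δ ^ (2 - k) / a ^ 2 := le_trans hα (min_le_left _ _)
  have hα2 : α ≤ Δ ^ (2 - k) / (2 * a) := by
    have hΔk2 : Δ ^ (k - 2) = (Δ ^ (2 - k))⁻¹ := by
      rw [show (k - 2 : ℝ) = -(2 - k) by ring, Real.rpow_neg hΔ.le]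
    have := le_trans hα (min_le_right _ _)
    rw [hΔk2] at this
    calc α ≤ 1 / (2 * a * (Δ ^ (2 - k))⁻¹) := this
      _ = Δ ^ (2 - k) / (2 * a) := by field_simp
  have hαv : α * ‖v‖ ≤ (1 / 2) * r := by
    calc α * ‖v‖ ≤ α * (a * r ^ (k - 1)) := mul_le_mul_of_nonneg_left hA hα0
      _ ≤ (Δ ^ (2 - k) / (2 * a)) * (a * r ^ (k - 1)) := by
          apply mul_le_mul_of_nonneg_right hα2 (by positivity)
      _ = Δ ^ (2 - k) * r ^ (k - 1) / 2 := by field_simp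
      _ ≤ r ^ (2 - k) * r ^ (k - 1) / 2 := by
          apply div_le_div_of_nonneg_right ?_ (by norm_num)
          · exact mul_le_mul_of_nonneg_right hΔ2k hrk1
      _ = (1 / 2) * r := by rw [mul_comm (r ^ (2-k))]; rw [e1]; ring
  have hlow : (1 / 2) * r ≤ ‖u - α • v‖ := by
    have h1 : ‖u‖ - ‖α • v‖ ≤ ‖u - α • v‖ := norm_sub_norm_le _ _
    rw [norm_smul, Real.norm_eq_abs, abs_of_nonneg hα0] at h1
    linarith
  refine ⟨hlow, ?_⟩
  have hsq : ‖u - α • v‖ ^ 2 = r ^ 2 - 2 * (α * ⟪u, v⟫) + α ^ 2 * ‖v‖ ^ 2 := by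
    rw [@norm_sub_sq_real, real_inner_smul_right, norm_smul, Real.norm_eq_abs,
      abs_of_nonneg hα0, mul_pow]
  have hkey : α ^ 2 * ‖v‖ ^ 2 ≤ 2 * (α * ⟪u, v⟫) := by
    rcases eq_or_lt_of_le hα0 with h0 | h0
    · simp [← h0]
    · have hv2 : ‖v‖ ^ 2 ≤ a ^ 2 * (r ^ (k-1) * r ^ (k-1)) := by
        have := mul_le_mul hA hA (norm_nonneg v) (by positivity)
        calc ‖v‖ ^ 2 = ‖v‖ * ‖v‖ := sq (‖v‖) ▸ by ring
          _ ≤ (a * r ^ (k-1)) * (a * r ^ (k-1)) := this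
          _ = a ^ 2 * (r ^ (k-1) * r ^ (k-1)) := by ring
      have key : α * ‖v‖ ^ 2 ≤ 2 * ⟪u, v⟫ := by
        calc α * ‖v‖ ^ 2 ≤ α * (a ^ 2 * (r ^ (k-1) * r ^ (k-1))) :=
              mul_le_mul_of_nonneg_left hv2 hα0
          _ ≤ (2 * b * Δ ^ (2 - k) / a ^ 2) * (a ^ 2 * (r ^ (k-1) * r ^ (k-1))) := by
              apply mul_le_mul_of_nonneg_right hα1 (by positivity)
          _ = 2 * b * (Δ ^ (2 - k) * (r ^ (k-1) * r ^ (k-1))) := by field_simp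
          _ ≤ 2 * b * (r ^ (2 - k) * (r ^ (k-1) * r ^ (k-1))) := by
              apply mul_le_mul_of_nonneg_left ?_ (by positivity)
              · apply mul_le_mul_of_nonneg_right hΔ2k (by positivity)
          _ = 2 * (b * r ^ k) := by rw [e2]; ring
          _ ≤ 2 * ⟪u, v⟫ := by linarith
      calc α ^ 2 * ‖v‖ ^ 2 = α * (α * ‖v‖ ^ 2) := by ring
        _ ≤ α * (2 * ⟪u, v⟫) := mul_le_mul_of_nonneg_left key hα0
        _ = 2 * (α * ⟪u, v⟫) := by ring
  have hsq2 : ‖u - α • v‖ ^ 2 ≤ r ^ 2 := by rw [hsq]; linarith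
  nlinarith [norm_nonneg (u - α • v), hr0]

end Aux

theorem stmt_4 (d : ℕ) (f : EuclideanSpace ℝ (Fin d) → ℝ)
    (g : EuclideanSpace ℝ (Fin d) → EuclideanSpace ℝ (Fin d))
    (θs : EuclideanSpace ℝ (Fin d)) (a b Δ k : ℝ)
    (hgrad : ∀ θ, HasGradientAt f (g θ) θ)
    (hmin : ∀ θ, f θs ≤ f θ)
    (ha : 0 < a) (hb : 0 < b) (hΔ : 0 < Δ) (hk1 : 1 ≤ k) (hk2 : k < 2)
    (hub : ∀ θ, Δ < ‖θ - θs‖ → ‖g θ‖ ≤ a * ‖θ - θs‖ ^ (k - 1))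
    (hlb : ∀ θ, Δ < ‖θ - θs‖ → b * ‖θ - θs‖ ^ k ≤ ⟪θ - θs, g θ⟫)
    (θ : EuclideanSpace ℝ (Fin d)) (hθ : Δ ≤ ‖θ - θs‖)
    (α : ℝ) (hα0 : 0 ≤ α)
    (hα : α ≤ min (2 * b * Δ ^ (2 - k) / a ^ 2) (1 / (2 * a * Δ ^ (k - 2)))) :
    (1 / 2) * ‖θ - θs‖ ≤ ‖θ - θs - α • g θ‖ ∧ ‖θ - θs - α • g θ‖ ≤ ‖θ - θs‖ := by
  rcases lt_or_eq_of_le hθ with hlt | hr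
  · exact aux_main (θ - θs) (g θ) a b Δ k α ha hb hΔ hk2 hθ (hub θ hlt) (hlb θ hlt) hα0 hα
  -- boundary case : ‖θ - θs‖ = Δ
  have hr : ‖θ - θs‖ = Δ := hr.symm
  set u := θ - θs with hu
  -- Step 1 : radial lower bound on the inner product
  have hB : b * Δ ^ k ≤ ⟪u, g θ⟫ := by
    have hφ : ∀ t : ℝ, HasDerivAt (fun s : ℝ => f (θ + s • u)) ⟪g (θ + t • u), u⟫ t :=
      aux_line_deriv f g hgrad θ u
    have hbound : ∀ t : ℝ, 0 < t → b * Δ ^ k ≤ ⟪g (θ + t • u), u⟫ := by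
      intro t ht
      have hpt : θ + t • u - θs = (1 + t) • u := by
        rw [hu]; module
      have h1t : (0:ℝ) < 1 + t := by linarith
      have hnorm : ‖θ + t • u - θs‖ = (1 + t) * Δ := by
        rw [hpt, norm_smul, Real.norm_eq_abs, abs_of_pos h1t, hr]
      have hgt : Δ < ‖θ + t • u - θs‖ := by
        rw [hnorm]; nlinarith
      have h := hlb (θ + t • u) hgt
      rw [hnorm, hpt, real_inner_smul_left] at h
      have hexp : ((1 + t) * Δ) ^ k = (1 + t) * ((1 + t) ^ (k - 1) * Δ ^ k) := by
        rw [Real.mul_rpow h1t.le hΔ.le,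
          show (1 + t) ^ k = (1 + t) ^ (1 + (k - 1)) by ring_nf,
          Real.rpow_add h1t, Real.rpow_one]
        ring
      rw [hexp] at h
      have h2 : b * ((1 + t) ^ (k - 1) * Δ ^ k) ≤ ⟪u, g (θ + t • u)⟫ := by
        have := le_of_mul_le_mul_left (by linarith : (1 + t) * (b * ((1 + t) ^ (k-1) * Δ ^ k)) ≤ (1 + t) * ⟪u, g (θ + t • u)⟫) h1t
        linarith
      have hone : (1:ℝ) ≤ (1 + t) ^ (k - 1) := Real.one_le_rpow (by linarith) (by linarith)
      have hΔk : (0:ℝ) < Δ ^ k := rpow_pos_of_pos hΔ _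
      rw [real_inner_comm]
      have h3 : Δ ^ k ≤ (1 + t) ^ (k - 1) * Δ ^ k := by nlinarith
      have h4 : b * Δ ^ k ≤ b * ((1 + t) ^ (k - 1) * Δ ^ k) :=
        mul_le_mul_of_nonneg_left h3 hb.le
      linarith
    have h0 : HasDerivAt (fun s : ℝ => f (θ + s • u)) ⟪g θ, u⟫ 0 := by
      simpa using hφ 0
    have := aux_deriv_ge _ _ h0 (b * Δ ^ k)
      (fun T hT => aux_incr_ge _ _ hφ _ T hT (fun t ht _ => hbound t ht))
    rw [real_inner_comm]
    exact this
  -- Step 2 : bound on the gradient norm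
  have hΔkpos : (0:ℝ) < Δ ^ k := rpow_pos_of_pos hΔ _
  have huv : 0 < ⟪u, g θ⟫ := lt_of_lt_of_le (by positivity) hB
  have hvne : g θ ≠ 0 := by
    intro h; rw [h, inner_zero_right] at huv; exact lt_irrefl _ huv
  have hvpos : 0 < ‖g θ‖ := norm_pos_iff.mpr hvne
  set v := g θ with hv
  have hA : ‖v‖ ≤ a * Δ ^ (k - 1) := by
    have hφ : ∀ t : ℝ, HasDerivAt (fun s : ℝ => f (θ + s • v)) ⟪g (θ + t • v), v⟫ t :=
      aux_line_deriv f g hgrad θ v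
    set D : ℝ → ℝ := fun T => a * (Δ + T * ‖v‖) ^ (k - 1) * ‖v‖ with hD
    have hclaim : ∀ T : ℝ, 0 < T →
        (fun s : ℝ => f (θ + s • v)) T - (fun s : ℝ => f (θ + s • v)) 0 ≤ D T * T := by
      intro T hT
      apply aux_incr_le _ _ hφ _ _ hT
      intro t ht htT
      have hpt : θ + t • v - θs = u + t • v := by rw [hu]; module
      have hn2 : ‖θ + t • v - θs‖ ^ 2 = Δ ^ 2 + 2 * (t * ⟪u, v⟫) + t ^ 2 * ‖v‖ ^ 2 := by
        rw [hpt, @norm_add_sq_real, real_inner_smul_right, norm_smul, Real.norm_eq_abs,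
          abs_of_pos ht, hr, mul_pow]
      have hgt : Δ < ‖θ + t • v - θs‖ := by
        nlinarith [norm_nonneg (θ + t • v - θs), hn2, mul_pos ht huv,
          mul_pos (mul_pos ht ht) (mul_pos hvpos hvpos)]
      have hle1 : ‖θ + t • v - θs‖ ≤ Δ + T * ‖v‖ := by
        calc ‖θ + t • v - θs‖ = ‖u + t • v‖ := by rw [hpt]
          _ ≤ ‖u‖ + ‖t • v‖ := norm_add_le _ _
          _ = Δ + t * ‖v‖ := by rw [hr, norm_smul, Real.norm_eq_abs, abs_of_pos ht]
          _ ≤ Δ + T * ‖v‖ := by nlinarith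
      have hg := hub (θ + t • v) hgt
      have hrp : ‖θ + t • v - θs‖ ^ (k - 1) ≤ (Δ + T * ‖v‖) ^ (k - 1) :=
        rpow_le_rpow (norm_nonneg _) hle1 (by linarith)
      calc ⟪g (θ + t • v), v⟫ ≤ ‖g (θ + t • v)‖ * ‖v‖ := real_inner_le_norm _ _
        _ ≤ (a * ‖θ + t • v - θs‖ ^ (k - 1)) * ‖v‖ :=
            mul_le_mul_of_nonneg_right hg (norm_nonneg _)
        _ ≤ D T := by
            rw [hD]
            have : a * ‖θ + t • v - θs‖ ^ (k - 1) ≤ a * (Δ + T * ‖v‖) ^ (k - 1) :=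
              mul_le_mul_of_nonneg_left hrp ha.le
            exact mul_le_mul_of_nonneg_right this (norm_nonneg _)
    have hDt : Tendsto D (nhdsWithin 0 (Set.Ioi 0)) (nhds (a * Δ ^ (k - 1) * ‖v‖)) := by
      have hc1 : ContinuousAt (fun T : ℝ => Δ + T * ‖v‖) 0 := by fun_prop
      have hc2 : ContinuousAt (fun T : ℝ => (Δ + T * ‖v‖) ^ (k - 1)) 0 :=
        hc1.rpow_const (Or.inl (by simp; positivity))
      have hc : ContinuousAt D 0 :=
        (continuousAt_const.mul hc2).mul continuousAt_const
      have := hc.tendsto.mono_left (nhdsWithin_le_nhds (s := Set.Ioi (0:ℝ)))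
      simpa [hD] using this
    have h0 : HasDerivAt (fun s : ℝ => f (θ + s • v)) ⟪g θ, v⟫ 0 := by
      simpa using hφ 0
    have hfin := aux_deriv_le _ _ h0 D _ hDt hclaim
    rw [← hv, real_inner_self_eq_norm_mul_norm] at hfin
    exact le_of_mul_le_mul_right hfin hvpos
  exact aux_main u v a b Δ k α ha hb hΔ hk2 hθ (by rw [hr]; exact hA) (by rw [hr]; exact hB) hα0 hα
end

section
/- Let x be a random vector in ℝ^d with E[x xᵀ] = I_d, and suppose ‖x‖ is σ_x-sub-exponential in the sense that P(‖x‖ > t) ≤ 2exp(−t/σ_x) for all t ≥ 0, with E[‖x‖⁴] < ∞. Then, setting Δ_x = σ_x · ln(8·E[‖x‖⁴]), for every u ∈ ℝ^d: uᵀ E[x xᵀ · 1{‖x‖ ≤ Δ_x}] u ≥ (1/2)‖u‖². -/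
open Real MeasureTheory RealInnerProductSpace

theorem stmt_6 {Ω : Type*} [MeasurableSpace Ω] (μ : Measure Ω) [IsProbabilityMeasure μ]
    (d : ℕ) (x : Ω → EuclideanSpace ℝ (Fin d)) (σx : ℝ) (hσ : 0 < σx)
    (hmeas : Measurable x)
    (hiso : ∀ u v : EuclideanSpace ℝ (Fin d), ∫ ω, ⟪x ω, u⟫ * ⟪x ω, v⟫ ∂μ = ⟪u, v⟫)
    (htail : ∀ t : ℝ, 0 ≤ t → μ {ω | t < ‖x ω‖} ≤ ENNReal.ofReal (2 * Real.exp (-t / σx)))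
    (hint : Integrable (fun ω => ‖x ω‖ ^ 4) μ)
    (u : EuclideanSpace ℝ (Fin d)) :
    (1 / 2) * ‖u‖ ^ 2 ≤
      ∫ ω, (if ‖x ω‖ ≤ σx * Real.log (8 * ∫ ω', ‖x ω'‖ ^ 4 ∂μ) then ⟪x ω, u⟫ ^ 2 else 0) ∂μ := by
  set M : ℝ := ∫ ω', ‖x ω'‖ ^ 4 ∂μ with hMdef
  set Δ : ℝ := σx * Real.log (8 * M) with hΔdef
  have hxn : Measurable fun ω => ‖x ω‖ := hmeas.norm
  have hM0 : 0 ≤ M := integral_nonneg fun ω => by positivity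
  by_cases hu : u = 0
  · subst hu
    simp only [norm_zero]
    have : (0:ℝ) ≤ ∫ ω, (if ‖x ω‖ ≤ Δ then ⟪x ω, (0 : EuclideanSpace ℝ (Fin d))⟫ ^ 2 else 0) ∂μ :=
      integral_nonneg fun ω => by positivity
    simpa using this
  -- basic integrabilities
  have hint2 : Integrable (fun ω => ‖x ω‖ ^ 2) μ := by
    refine Integrable.mono ((integrable_const (1:ℝ)).add hint) ((hxn.pow_const 2).aestronglyMeasurable) ?_
    refine ae_of_all _ fun ω => ?_
    simp only [Pi.add_apply, Real.norm_eq_abs]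
    rw [abs_of_nonneg (by positivity : (0:ℝ) ≤ ‖x ω‖ ^ 2),
      abs_of_nonneg (by positivity : (0:ℝ) ≤ 1 + ‖x ω‖ ^ 4)]
    nlinarith [sq_nonneg (‖x ω‖ ^ 2 - 1)]
  have hinner : ∀ v : EuclideanSpace ℝ (Fin d), Measurable fun ω => ⟪x ω, v⟫ :=
    fun v => Measurable.inner hmeas measurable_const
  have hfintv : ∀ v : EuclideanSpace ℝ (Fin d), Integrable (fun ω => ⟪x ω, v⟫ ^ 2) μ := by
    intro v
    refine Integrable.mono (hint2.const_mul (‖v‖ ^ 2)) (((hinner v).pow_const 2).aestronglyMeasurable) ?_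
    refine ae_of_all _ fun ω => ?_
    have h1 : |⟪x ω, v⟫| ≤ ‖x ω‖ * ‖v‖ := abs_real_inner_le_norm _ _
    have h2 : (0:ℝ) ≤ ‖x ω‖ := norm_nonneg _
    have h3 : (0:ℝ) ≤ ‖v‖ := norm_nonneg _
    rw [Real.norm_of_nonneg (by positivity)]
    have h4 : ⟪x ω, v⟫ ^ 2 ≤ (‖x ω‖ * ‖v‖) ^ 2 := by
      rw [← sq_abs]; exact pow_le_pow_left₀ (abs_nonneg _) h1 2
    calc ⟪x ω, v⟫ ^ 2 ≤ (‖x ω‖ * ‖v‖) ^ 2 := h4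
      _ = ‖v‖ ^ 2 * ‖x ω‖ ^ 2 := by ring
      _ ≤ ‖‖v‖ ^ 2 * ‖x ω‖ ^ 2‖ := le_abs_self _
  have hconj : Real.HolderConjugate 2 2 := Real.HolderConjugate.two_two
  have hmem2 : MemLp (fun ω => ‖x ω‖ ^ 2) (ENNReal.ofReal 2) μ := by
    have : ENNReal.ofReal 2 = 2 := by norm_num
    rw [this]
    refine (memLp_two_iff_integrable_sq ((hxn.pow_const 2).aestronglyMeasurable)).2 ?_
    have : (fun ω => (‖x ω‖ ^ 2) ^ 2) = fun ω => ‖x ω‖ ^ 4 := by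
      funext ω; ring
    rw [this]; exact hint
  -- Hölder: for nonneg g in L², ∫ ‖x‖² g ≤ M^(1/2) (∫ g²)^(1/2)
  have holder : ∀ g : Ω → ℝ, (0 ≤ᵐ[μ] g) → MemLp g (ENNReal.ofReal 2) μ →
      ∫ ω, ‖x ω‖ ^ 2 * g ω ∂μ ≤ M ^ ((1:ℝ)/2) * (∫ ω, g ω ^ (2:ℝ) ∂μ) ^ ((1:ℝ)/2) := by
    intro g hg0 hg2
    have h := integral_mul_le_Lp_mul_Lq_of_nonneg hconj
      (ae_of_all _ fun ω => by positivity : 0 ≤ᵐ[μ] fun ω => ‖x ω‖ ^ 2) hg0 hmem2 hg2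
    have heq : (fun ω => (‖x ω‖ ^ 2) ^ (2:ℝ)) = fun ω => ‖x ω‖ ^ 4 := by
      funext ω
      rw [show ((2:ℝ)) = ((2:ℕ):ℝ) by norm_num, Real.rpow_natCast]
      ring
    rw [show (∫ a, (‖x a‖ ^ 2) ^ (2:ℝ) ∂μ) = ∫ a, ‖x a‖ ^ 4 ∂μ from by rw [heq], ← hMdef] at h
    exact h
  -- 1 ≤ M
  have hM1 : 1 ≤ M := by
    set e : EuclideanSpace ℝ (Fin d) := ‖u‖⁻¹ • u with he
    have hne : ‖e‖ = 1 := norm_smul_inv_norm hu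
    have h1 : ∫ ω, ⟪x ω, e⟫ ^ 2 ∂μ = 1 := by
      have := hiso e e
      rw [real_inner_self_eq_norm_sq, hne] at this
      simpa [pow_two] using this
    have h2 : (1:ℝ) ≤ ∫ ω, ‖x ω‖ ^ 2 ∂μ := by
      rw [← h1]
      refine integral_mono (hfintv e) hint2 fun ω => ?_
      have := abs_real_inner_le_norm (x ω) e
      rw [hne, mul_one] at this
      calc ⟪x ω, e⟫ ^ 2 = |⟪x ω, e⟫| ^ 2 := (sq_abs _).symm
        _ ≤ ‖x ω‖ ^ 2 := pow_le_pow_left₀ (abs_nonneg _) this 2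
    have hg1 : MemLp (fun _ : Ω => (1:ℝ)) (ENNReal.ofReal 2) μ := by
      exact MemLp.of_bound aestronglyMeasurable_const 1 (ae_of_all _ fun ω => by simp)
    have h3 := holder (fun _ => 1) (ae_of_all _ fun ω => zero_le_one) hg1
    simp only [mul_one, Real.one_rpow, integral_const, measure_univ, ENNReal.toReal_one, probReal_univ,
      smul_eq_mul, one_mul] at h3
    have h4 : (1:ℝ) ≤ M ^ ((1:ℝ)/2) := by
      calc (1:ℝ) ≤ ∫ ω, ‖x ω‖ ^ 2 ∂μ := h2
        _ ≤ M ^ ((1:ℝ)/2) := h3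
    by_contra hlt
    push_neg at hlt
    have : M ^ ((1:ℝ)/2) < 1 := Real.rpow_lt_one hM0 hlt (by norm_num)
    linarith
  have hMpos : 0 < M := by linarith
  -- Δ ≥ 0
  have hΔ0 : 0 ≤ Δ := by
    apply mul_nonneg hσ.le
    apply Real.log_nonneg
    linarith
  -- tail measure bound
  set A : Set Ω := {ω | Δ < ‖x ω‖} with hAdef
  have hAmeas : MeasurableSet A := measurableSet_lt measurable_const hxn
  have hμA : (μ A).toReal ≤ 1 / (4 * M) := by
    have h := htail Δ hΔ0
    have heq : 2 * Real.exp (-Δ / σx) = 1 / (4 * M) := by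
      rw [hΔdef]
      have : -(σx * Real.log (8 * M)) / σx = -Real.log (8 * M) := by
        field_simp
      rw [this, Real.exp_neg, Real.exp_log (by linarith)]
      field_simp
      ring
    rw [heq] at h
    exact ENNReal.toReal_le_of_le_ofReal (by positivity) h
  -- set up indicator
  set g : Ω → ℝ := A.indicator 1 with hgdef
  have hg0 : 0 ≤ᵐ[μ] g := ae_of_all _ fun ω => Set.indicator_nonneg (fun _ _ => zero_le_one) ω
  have hgmem : MemLp g (ENNReal.ofReal 2) μ := by
    refine MemLp.of_bound ((measurable_const.indicator hAmeas).aestronglyMeasurable) 1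
      (ae_of_all _ fun ω => ?_)
    rw [hgdef]
    by_cases hω : ω ∈ A <;> simp [hω]
  have hgsq : ∫ ω, g ω ^ (2:ℝ) ∂μ = (μ A).toReal := by
    have : (fun ω => g ω ^ (2:ℝ)) = g := by
      funext ω
      rw [hgdef]
      by_cases hω : ω ∈ A <;> simp [hω, Real.zero_rpow (by norm_num : (2:ℝ) ≠ 0)]
    rw [this, hgdef, integral_indicator_one hAmeas, measureReal_def]
  -- the tail integral of ‖x‖² is ≤ 1/2
  have htail2 : ∫ ω, ‖x ω‖ ^ 2 * g ω ∂μ ≤ 1 / 2 := by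
    have h := holder g hg0 hgmem
    rw [hgsq] at h
    have h2 : (μ A).toReal ^ ((1:ℝ)/2) ≤ (1 / (4 * M)) ^ ((1:ℝ)/2) :=
      Real.rpow_le_rpow ENNReal.toReal_nonneg hμA (by norm_num)
    calc ∫ ω, ‖x ω‖ ^ 2 * g ω ∂μ ≤ M ^ ((1:ℝ)/2) * (μ A).toReal ^ ((1:ℝ)/2) := h
      _ ≤ M ^ ((1:ℝ)/2) * (1 / (4 * M)) ^ ((1:ℝ)/2) := by
          exact mul_le_mul_of_nonneg_left h2 (Real.rpow_nonneg hM0 _)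
      _ = (M * (1 / (4 * M))) ^ ((1:ℝ)/2) := (Real.mul_rpow hM0 (by positivity)).symm
      _ = ((1:ℝ)/4) ^ ((1:ℝ)/2) := by
          congr 1
          field_simp
      _ = 1 / 2 := by
          rw [show (1:ℝ)/4 = (1/2)^(2:ℕ) by norm_num, ← Real.rpow_natCast ((1:ℝ)/2) 2,
            ← Real.rpow_mul (by norm_num)]
          norm_num
  -- split the integral
  have hfint : Integrable (fun ω => ⟪x ω, u⟫ ^ 2) μ := hfintv u
  have hcond : MeasurableSet {ω | ‖x ω‖ ≤ Δ} := measurableSet_le hxn measurable_const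
  have hint_if1 : Integrable (fun ω => if ‖x ω‖ ≤ Δ then ⟪x ω, u⟫ ^ 2 else 0) μ := by
    refine Integrable.mono hfint
      ((Measurable.ite hcond ((hinner u).pow_const 2) measurable_const).aestronglyMeasurable)
      (ae_of_all _ fun ω => ?_)
    by_cases hω : ‖x ω‖ ≤ Δ
    · rw [if_pos hω]
    · rw [if_neg hω, norm_zero]; exact norm_nonneg _
  have hint_if2 : Integrable (fun ω => if ‖x ω‖ ≤ Δ then 0 else ⟪x ω, u⟫ ^ 2) μ := by
    refine Integrable.mono hfint
      ((Measurable.ite hcond measurable_const ((hinner u).pow_const 2)).aestronglyMeasurable)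
      (ae_of_all _ fun ω => ?_)
    by_cases hω : ‖x ω‖ ≤ Δ
    · rw [if_pos hω, norm_zero]; exact norm_nonneg _
    · rw [if_neg hω]
  have hsum : ∫ ω, ⟪x ω, u⟫ ^ 2 ∂μ =
      (∫ ω, (if ‖x ω‖ ≤ Δ then ⟪x ω, u⟫ ^ 2 else 0) ∂μ) +
      (∫ ω, (if ‖x ω‖ ≤ Δ then 0 else ⟪x ω, u⟫ ^ 2) ∂μ) := by
    rw [← integral_add hint_if1 hint_if2]
    refine integral_congr_ae (ae_of_all _ fun ω => ?_)
    simp only [Pi.add_apply]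
    by_cases hω : ‖x ω‖ ≤ Δ
    · rw [if_pos hω, if_pos hω, add_zero]
    · rw [if_neg hω, if_neg hω, zero_add]
  have htotal : ∫ ω, ⟪x ω, u⟫ ^ 2 ∂μ = ‖u‖ ^ 2 := by
    have := hiso u u
    rw [real_inner_self_eq_norm_sq] at this
    simpa [pow_two] using this
  -- bound the tail part
  have hint_if3 : Integrable (fun ω => ‖u‖ ^ 2 * (‖x ω‖ ^ 2 * g ω)) μ := by
    refine Integrable.const_mul ?_ _
    refine Integrable.mono hint2
      (((hxn.pow_const 2).mul (measurable_const.indicator hAmeas)).aestronglyMeasurable)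
      (ae_of_all _ fun ω => ?_)
    simp only [hgdef, Real.norm_eq_abs]
    by_cases hω : ω ∈ A
    · rw [Set.indicator_of_mem hω, Pi.one_apply, mul_one]
    · rw [Set.indicator_of_notMem hω, mul_zero, abs_zero]
      exact abs_nonneg _
  have htailbound : ∫ ω, (if ‖x ω‖ ≤ Δ then 0 else ⟪x ω, u⟫ ^ 2) ∂μ ≤ ‖u‖ ^ 2 * (1/2) := by
    have step1 : ∫ ω, (if ‖x ω‖ ≤ Δ then 0 else ⟪x ω, u⟫ ^ 2) ∂μ ≤
        ∫ ω, ‖u‖ ^ 2 * (‖x ω‖ ^ 2 * g ω) ∂μ := by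
      refine integral_mono hint_if2 hint_if3 fun ω => ?_
      have hb : ⟪x ω, u⟫ ^ 2 ≤ ‖u‖ ^ 2 * ‖x ω‖ ^ 2 := by
        have h1 := abs_real_inner_le_norm (x ω) u
        have h4 : ⟪x ω, u⟫ ^ 2 ≤ (‖x ω‖ * ‖u‖) ^ 2 := by
          rw [← sq_abs]; exact pow_le_pow_left₀ (abs_nonneg _) h1 2
        nlinarith
      by_cases hω : ‖x ω‖ ≤ Δ
      · have hA' : ω ∉ A := by rw [hAdef]; simpa using hω
        rw [if_pos hω, hgdef, Set.indicator_of_notMem hA', mul_zero, mul_zero]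
      · have hA' : ω ∈ A := by rw [hAdef]; exact Set.mem_setOf.mpr (not_le.mp hω)
        rw [if_neg hω, hgdef, Set.indicator_of_mem hA', Pi.one_apply, mul_one]
        exact hb
    calc ∫ ω, (if ‖x ω‖ ≤ Δ then 0 else ⟪x ω, u⟫ ^ 2) ∂μ
        ≤ ∫ ω, ‖u‖ ^ 2 * (‖x ω‖ ^ 2 * g ω) ∂μ := step1
      _ = ‖u‖ ^ 2 * ∫ ω, ‖x ω‖ ^ 2 * g ω ∂μ := integral_const_mul _ _
      _ ≤ ‖u‖ ^ 2 * (1/2) := by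
          exact mul_le_mul_of_nonneg_left htail2 (sq_nonneg _)
  have : ∫ ω, (if ‖x ω‖ ≤ Δ then ⟪x ω, u⟫ ^ 2 else 0) ∂μ =
      ‖u‖ ^ 2 - ∫ ω, (if ‖x ω‖ ≤ Δ then 0 else ⟪x ω, u⟫ ^ 2) ∂μ := by
    rw [← htotal, hsum]; ring
  rw [this]
  linarith [htailbound]
end

section
/- Let x be a random vector in ℝ^d with E[x xᵀ] = I_d and E[‖x‖⁴] < ∞. Then for every a ≥ 0 and every nonzero θ ∈ ℝ^d: E[|xᵀθ| · 1{|xᵀθ| ≥ a}] ≥ (9/(32·E[‖x‖⁴]))·‖θ‖ − a. -/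
open Real MeasureTheory RealInnerProductSpace

lemma my_cs {Ω : Type*} [MeasurableSpace Ω] (μ : Measure Ω) (f g : Ω → ℝ)
    (hf : Measurable f) (hg : Measurable g)
    (hf2 : Integrable (fun ω => f ω ^ 2) μ) (hg2 : Integrable (fun ω => g ω ^ 2) μ) :
    (∫ ω, |f ω| * |g ω| ∂μ) ^ 2 ≤ (∫ ω, f ω ^ 2 ∂μ) * (∫ ω, g ω ^ 2 ∂μ) := by
  have h2 : ENNReal.ofReal (2:ℝ) = 2 := by norm_num
  have hmf : MemLp (fun ω => |f ω|) (ENNReal.ofReal (2:ℝ)) μ := by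
    rw [h2]
    exact (memLp_two_iff_integrable_sq hf.abs.aestronglyMeasurable).2 (by simpa [sq_abs] using hf2)
  have hmg : MemLp (fun ω => |g ω|) (ENNReal.ofReal (2:ℝ)) μ := by
    rw [h2]
    exact (memLp_two_iff_integrable_sq hg.abs.aestronglyMeasurable).2 (by simpa [sq_abs] using hg2)
  have hpq : Real.HolderConjugate 2 2 := Real.HolderConjugate.two_two
  have h := integral_mul_le_Lp_mul_Lq_of_nonneg hpq
    (Filter.Eventually.of_forall fun ω => abs_nonneg (f ω))
    (Filter.Eventually.of_forall fun ω => abs_nonneg (g ω)) hmf hmg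
  have hA : (0:ℝ) ≤ ∫ ω, f ω ^ 2 ∂μ := integral_nonneg fun ω => sq_nonneg _
  have hB : (0:ℝ) ≤ ∫ ω, g ω ^ 2 ∂μ := integral_nonneg fun ω => sq_nonneg _
  have hf' : (∫ ω, |f ω| ^ (2:ℝ) ∂μ) = ∫ ω, f ω ^ 2 ∂μ := by
    congr 1; ext ω
    rw [show ((2:ℝ)) = ((2:ℕ):ℝ) by norm_num, Real.rpow_natCast, sq_abs]
  have hg' : (∫ ω, |g ω| ^ (2:ℝ) ∂μ) = ∫ ω, g ω ^ 2 ∂μ := by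
    congr 1; ext ω
    rw [show ((2:ℝ)) = ((2:ℕ):ℝ) by norm_num, Real.rpow_natCast, sq_abs]
  rw [hf', hg'] at h
  have hL : (0:ℝ) ≤ ∫ ω, |f ω| * |g ω| ∂μ :=
    integral_nonneg fun ω => mul_nonneg (abs_nonneg _) (abs_nonneg _)
  calc (∫ ω, |f ω| * |g ω| ∂μ) ^ 2
      ≤ ((∫ ω, f ω ^ 2 ∂μ) ^ (1/2:ℝ) * (∫ ω, g ω ^ 2 ∂μ) ^ (1/2:ℝ)) ^ 2 :=
        pow_le_pow_left₀ hL h 2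
    _ = (∫ ω, f ω ^ 2 ∂μ) * (∫ ω, g ω ^ 2 ∂μ) := by
        rw [mul_pow, ← Real.rpow_natCast (_ ^ (1/2:ℝ)) 2, ← Real.rpow_natCast (_ ^ (1/2:ℝ)) 2,
          ← Real.rpow_mul hA, ← Real.rpow_mul hB]
        norm_num

lemma pow_le_one_add_pow4 (t : ℝ) (ht : 0 ≤ t) (p : ℕ) (hp : p ≤ 4) : t ^ p ≤ 1 + t ^ 4 := by
  rcases le_total t 1 with h | h
  · calc t ^ p ≤ 1 := pow_le_one₀ ht h
      _ ≤ 1 + t ^ 4 := by nlinarith [pow_nonneg ht 4]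
  · calc t ^ p ≤ t ^ 4 := pow_le_pow_right₀ h hp
      _ ≤ 1 + t ^ 4 := by linarith

set_option maxHeartbeats 800000 in
theorem stmt_7 {Ω : Type*} [MeasurableSpace Ω] (μ : Measure Ω) [IsProbabilityMeasure μ]
    (d : ℕ) (x : Ω → EuclideanSpace ℝ (Fin d))
    (hmeas : Measurable x)
    (hiso : ∀ u v : EuclideanSpace ℝ (Fin d), ∫ ω, ⟪x ω, u⟫ * ⟪x ω, v⟫ ∂μ = ⟪u, v⟫)
    (hint : Integrable (fun ω => ‖x ω‖ ^ 4) μ)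
    (a : ℝ) (ha : 0 ≤ a) (θ : EuclideanSpace ℝ (Fin d)) (hθ : θ ≠ 0) :
    9 / (32 * ∫ ω, ‖x ω‖ ^ 4 ∂μ) * ‖θ‖ - a ≤
      ∫ ω, (if a ≤ |⟪x ω, θ⟫| then |⟪x ω, θ⟫| else 0) ∂μ := by
  set Z : Ω → ℝ := fun ω => ⟪x ω, θ⟫ with hZdef
  set K : ℝ := ∫ ω, ‖x ω‖ ^ 4 ∂μ with hKdef
  have hZ : Measurable Z := by
    have hc : Continuous fun v : EuclideanSpace ℝ (Fin d) => ⟪v, θ⟫ :=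
      ((innerSL ℝ).flip θ).continuous
    exact hc.measurable.comp hmeas
  set t := ‖θ‖ with htdef
  have ht : 0 < t := norm_pos_iff.2 hθ
  have hZb : ∀ ω, |Z ω| ≤ ‖x ω‖ * t := fun ω => abs_real_inner_le_norm _ _
  -- integrability of powers
  have hI4 : Integrable (fun ω => Z ω ^ 4) μ := by
    refine Integrable.mono' (hint.mul_const (t ^ 4)) ((hZ.pow_const 4).aestronglyMeasurable)
      (Filter.Eventually.of_forall fun ω => ?_)
    calc ‖Z ω ^ 4‖ = |Z ω| ^ 4 := by rw [Real.norm_eq_abs, abs_pow]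
      _ ≤ (‖x ω‖ * t) ^ 4 := pow_le_pow_left₀ (abs_nonneg _) (hZb ω) 4
      _ = ‖x ω‖ ^ 4 * t ^ 4 := by ring
  have hIp : ∀ p : ℕ, p ≤ 4 → Integrable (fun ω => |Z ω| ^ p) μ := by
    intro p hp
    refine Integrable.mono' ((integrable_const (1:ℝ)).add hI4)
      ((hZ.abs.pow_const p).aestronglyMeasurable) (Filter.Eventually.of_forall fun ω => ?_)
    rw [Real.norm_eq_abs, abs_pow, abs_abs]
    calc |Z ω| ^ p ≤ 1 + |Z ω| ^ 4 := pow_le_one_add_pow4 _ (abs_nonneg _) p hp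
      _ = 1 + Z ω ^ 4 := by rw [← abs_pow, abs_of_nonneg (by positivity)]
  have hI1 : Integrable (fun ω => |Z ω|) μ := by simpa using hIp 1 (by norm_num)
  have hI2 : Integrable (fun ω => Z ω ^ 2) μ := by simpa [sq_abs] using hIp 2 (by norm_num)
  have hI3 : Integrable (fun ω => |Z ω| ^ 3) μ := hIp 3 (by norm_num)
  set I1 : ℝ := ∫ ω, |Z ω| ∂μ with hI1def
  set I2 : ℝ := ∫ ω, Z ω ^ 2 ∂μ with hI2def
  set I3 : ℝ := ∫ ω, |Z ω| ^ 3 ∂μ with hI3def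
  set I4 : ℝ := ∫ ω, Z ω ^ 4 ∂μ with hI4def
  have hI1nn : 0 ≤ I1 := integral_nonneg fun ω => abs_nonneg _
  have hI3nn : 0 ≤ I3 := integral_nonneg fun ω => by positivity
  -- second moment identity
  have h2 : I2 = t ^ 2 := by
    have h := hiso θ θ
    rw [real_inner_self_eq_norm_sq] at h
    rw [hI2def, ← h]
    congr 1; ext ω; rw [sq]
  -- fourth moment bound
  have h4 : I4 ≤ K * t ^ 4 := by
    have hle : ∀ ω, Z ω ^ 4 ≤ ‖x ω‖ ^ 4 * t ^ 4 := by
      intro ω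
      calc Z ω ^ 4 = |Z ω| ^ 4 := by rw [← abs_pow, abs_of_nonneg (by positivity)]
        _ ≤ (‖x ω‖ * t) ^ 4 := pow_le_pow_left₀ (abs_nonneg _) (hZb ω) 4
        _ = ‖x ω‖ ^ 4 * t ^ 4 := by ring
    calc I4 ≤ ∫ ω, ‖x ω‖ ^ 4 * t ^ 4 ∂μ := integral_mono hI4 (hint.mul_const _) hle
      _ = K * t ^ 4 := by rw [integral_mul_const]
  -- Cauchy-Schwarz (a): I2^2 ≤ I1 * I3
  have hCSa : I2 ^ 2 ≤ I1 * I3 := by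
    have h := my_cs μ (fun ω => Real.sqrt |Z ω|) (fun ω => |Z ω| * Real.sqrt |Z ω|)
      (hZ.abs.sqrt) (hZ.abs.mul hZ.abs.sqrt)
      (by simpa [Real.sq_sqrt (abs_nonneg _)] using hI1)
      (by
        have : (fun ω => (|Z ω| * Real.sqrt |Z ω|) ^ 2) = fun ω => |Z ω| ^ 3 := by
          ext ω
          rw [mul_pow, Real.sq_sqrt (abs_nonneg _)]
          ring
        rw [this]; exact hI3)
    have e1 : (∫ ω, abs (Real.sqrt (abs (Z ω))) * abs (abs (Z ω) * Real.sqrt (abs (Z ω))) ∂μ) = I2 := by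
      rw [hI2def]; congr 1; ext ω
      rw [abs_of_nonneg (Real.sqrt_nonneg (|Z ω|)), abs_of_nonneg (mul_nonneg (abs_nonneg (Z ω)) (Real.sqrt_nonneg (|Z ω|)))]
      calc Real.sqrt |Z ω| * (|Z ω| * Real.sqrt |Z ω|) = |Z ω| * (Real.sqrt |Z ω| * Real.sqrt |Z ω|) := by ring
        _ = |Z ω| * |Z ω| := by rw [Real.mul_self_sqrt (abs_nonneg _)]
        _ = Z ω ^ 2 := by rw [← sq_abs, sq]
    have e2 : (∫ ω, Real.sqrt |Z ω| ^ 2 ∂μ) = I1 := by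
      rw [hI1def]; congr 1; ext ω; rw [Real.sq_sqrt (abs_nonneg _)]
    have e3 : (∫ ω, (|Z ω| * Real.sqrt |Z ω|) ^ 2 ∂μ) = I3 := by
      rw [hI3def]; congr 1; ext ω
      rw [mul_pow, Real.sq_sqrt (abs_nonneg _)]; ring
    rw [e1, e2, e3] at h
    exact h
  -- Cauchy-Schwarz (b): I3^2 ≤ I2 * I4
  have hCSb : I3 ^ 2 ≤ I2 * I4 := by
    have h := my_cs μ (fun ω => |Z ω|) (fun ω => Z ω ^ 2)
      hZ.abs (hZ.pow_const 2)
      (by simpa [sq_abs] using hI2)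
      (by
        have : (fun ω => (Z ω ^ 2) ^ 2) = fun ω => Z ω ^ 4 := by ext ω; ring
        rw [this]; exact hI4)
    have e1 : (∫ ω, abs (abs (Z ω)) * abs (Z ω ^ 2) ∂μ) = I3 := by
      rw [hI3def]; congr 1; ext ω
      rw [abs_abs, abs_of_nonneg (sq_nonneg (Z ω)), ← sq_abs (Z ω)]; ring
    have e2 : (∫ ω, |Z ω| ^ 2 ∂μ) = I2 := by
      rw [hI2def]; congr 1; ext ω; rw [sq_abs]
    have e3 : (∫ ω, (Z ω ^ 2) ^ 2 ∂μ) = I4 := by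
      rw [hI4def]; congr 1; ext ω; ring
    rw [e1, e2, e3] at h
    exact h
  -- Cauchy-Schwarz (c): I2^2 ≤ I4
  have hCSc : I2 ^ 2 ≤ I4 := by
    have h := my_cs μ (fun ω => Z ω ^ 2) (fun _ => (1:ℝ))
      (hZ.pow_const 2) measurable_const
      (by
        have : (fun ω => (Z ω ^ 2) ^ 2) = fun ω => Z ω ^ 4 := by ext ω; ring
        rw [this]; exact hI4)
      (by simpa using (integrable_const (1:ℝ)))
    have e1 : (∫ ω, abs (Z ω ^ 2) * abs (1:ℝ) ∂μ) = I2 := by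
      rw [hI2def]; congr 1; ext ω
      rw [abs_of_nonneg (sq_nonneg (Z ω)), abs_one, mul_one]
    have e3 : (∫ (_ : Ω), ((1:ℝ)) ^ 2 ∂μ) = 1 := by simp
    have e2 : (∫ ω, (Z ω ^ 2) ^ 2 ∂μ) = I4 := by
      rw [hI4def]; congr 1; ext ω; ring
    rw [e1, e2, e3, mul_one] at h
    exact h
  -- K ≥ 1
  have hK1 : 1 ≤ K := by nlinarith [pow_pos ht 4, pow_pos ht 2]
  have hKpos : 0 < K := lt_of_lt_of_le one_pos hK1
  -- main moment bound: t^2 ≤ K * I1^2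
  have hmain : t ^ 2 ≤ K * I1 ^ 2 := by
    have hA2 : (t ^ 4) ^ 2 ≤ (I1 * I3) ^ 2 := by
      apply pow_le_pow_left₀ (by positivity)
      calc t ^ 4 = (t ^ 2) ^ 2 := by ring
        _ = I2 ^ 2 := by rw [h2]
        _ ≤ I1 * I3 := hCSa
    have hB' : I3 ^ 2 ≤ K * t ^ 6 := by
      calc I3 ^ 2 ≤ I2 * I4 := hCSb
        _ ≤ t ^ 2 * (K * t ^ 4) := by
            rw [h2]
            exact mul_le_mul_of_nonneg_left h4 (by positivity)
        _ = K * t ^ 6 := by ring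
    have hprod : 0 ≤ I1 ^ 2 * (K * t ^ 6 - I3 ^ 2) :=
      mul_nonneg (sq_nonneg _) (by linarith)
    have ht6 : (0:ℝ) < t ^ 6 := by positivity
    nlinarith [hA2, hprod, ht6, sq_nonneg I1, mul_pos ht6 hKpos]
  -- 9 t ≤ 32 K I1
  have h9 : 9 * t ≤ 32 * (K * I1) := by
    have hKI : 0 ≤ K * I1 := mul_nonneg hKpos.le hI1nn
    have h1 : 0 ≤ K * I1 ^ 2 * (K - 1) :=
      mul_nonneg (mul_nonneg hKpos.le (sq_nonneg _)) (by linarith)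
    have h2' : t ^ 2 ≤ (K * I1) ^ 2 := by nlinarith [hmain, h1]
    nlinarith [h2', hKI, ht]
  have hfinal : 9 / (32 * K) * t ≤ I1 := by
    have hpos : (0:ℝ) < 32 * K := by nlinarith [hK1]
    rw [show 9 / (32 * K) * t = 9 * t / (32 * K) by ring, div_le_iff₀ hpos]
    nlinarith [h9]
  -- integrability of the truncated function
  have hind : Integrable (fun ω => if a ≤ |Z ω| then |Z ω| else 0) μ := by
    refine Integrable.mono' hI1
      ((Measurable.ite (measurableSet_le measurable_const hZ.abs) hZ.abs
        measurable_const).aestronglyMeasurable) (Filter.Eventually.of_forall fun ω => ?_)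
    rw [Real.norm_eq_abs]
    split_ifs with h
    · rw [abs_abs]
    · simp [abs_nonneg]
  have hstep : I1 - a ≤ ∫ ω, (if a ≤ |Z ω| then |Z ω| else 0) ∂μ := by
    have hsub : Integrable (fun ω => |Z ω| - a) μ := hI1.sub (integrable_const a)
    have hmono : ∫ ω, (|Z ω| - a) ∂μ ≤ ∫ ω, (if a ≤ |Z ω| then |Z ω| else 0) ∂μ := by
      refine integral_mono hsub hind fun ω => ?_
      split_ifs with h
      · linarith
      · push_neg at h; linarith
    have heq : ∫ ω, (|Z ω| - a) ∂μ = I1 - a := by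
      rw [integral_sub hI1 (integrable_const a), integral_const]
      simp [hI1def]
    linarith [hmono, heq ▸ hmono]
  linarith [hfinal, hstep]
end

section
/- Let X be a real random variable and q ∈ (0,1]. If there exists K > 0 with P(|X| ≥ t) ≤ 2·exp(−t^q/K^q) for all t ≥ 0, then there exists a constant C (depending only on an absolute constant) such that (E|X|^p)^{1/p} ≤ C·K·p^{1/q} for all p ≥ 1. -/
open Real MeasureTheory

theorem stmt_9 {Ω : Type*} [MeasurableSpace Ω] (μ : Measure Ω) [IsProbabilityMeasure μ]
    (X : Ω → ℝ) (hX : Measurable X) (q K : ℝ) (hq1 : 0 < q) (hq2 : q ≤ 1) (hK : 0 < K)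
    (htail : ∀ t : ℝ, 0 ≤ t →
      μ {ω | t ≤ |X ω|} ≤ ENNReal.ofReal (2 * Real.exp (-(t ^ q) / K ^ q))) :
    ∃ C : ℝ, 0 < C ∧ ∀ p : ℝ, 1 ≤ p →
      (∫ ω, |X ω| ^ p ∂μ) ^ (1 / p) ≤ C * K * p ^ (1 / q) := by
  refine ⟨4 * (2 / q) ^ (1 / q), by positivity, fun p hp => ?_⟩
  have hp0 : (0 : ℝ) < p := lt_of_lt_of_le one_pos hp
  set m : ℝ := 2 * p / q with hm_def
  have hm0 : 0 < m := by positivity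
  set A : ℝ := K * m ^ (1 / q) with hA_def
  have hA0 : 0 < A := by positivity
  set t₀ : ℝ := 2 * A with ht₀_def
  have ht₀0 : 0 < t₀ := by positivity
  set c : ℝ := 2 * A ^ (2 * p) with hc_def
  have hc0 : 0 < c := by positivity
  -- pointwise tail bound for t > 0
  have key : ∀ t : ℝ, 0 < t →
      2 * Real.exp (-(t ^ q) / K ^ q) ≤ c * t ^ (-(2 * p)) := by
    intro t ht
    set x : ℝ := t ^ q / K ^ q with hx_def
    have hx0 : 0 < x := by positivity
    have hexp : x ^ m ≤ Real.exp x * m ^ m := by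
      have h1 : x / m ≤ Real.exp (x / m) := by
        have := Real.add_one_le_exp (x / m); linarith
      have h2 : (x / m) ^ m ≤ (Real.exp (x / m)) ^ m :=
        Real.rpow_le_rpow (by positivity) h1 hm0.le
      rw [Real.div_rpow hx0.le hm0.le, Real.rpow_def_of_pos (Real.exp_pos _),
        Real.log_exp, div_mul_cancel₀ x hm0.ne'] at h2
      have hmm : (0 : ℝ) < m ^ m := Real.rpow_pos_of_pos hm0 m
      calc x ^ m = x ^ m / m ^ m * m ^ m := by field_simp
        _ ≤ Real.exp x * m ^ m := mul_le_mul_of_nonneg_right h2 hmm.le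
    have hexpneg : Real.exp (-x) ≤ m ^ m * x ^ (-m) := by
      have hxm : (0 : ℝ) < x ^ m := Real.rpow_pos_of_pos hx0 m
      have h3 : Real.exp (-x) * x ^ m ≤ m ^ m := by
        rw [Real.exp_neg, inv_mul_le_iff₀ (Real.exp_pos _)]
        linarith [hexp]
      calc Real.exp (-x) = Real.exp (-x) * x ^ m * (x ^ m)⁻¹ := by field_simp
        _ ≤ m ^ m * (x ^ m)⁻¹ := by gcongr
        _ = m ^ m * x ^ (-m) := by rw [Real.rpow_neg hx0.le]
    have hqm : q * (-m) = -(2 * p) := by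
      rw [hm_def]; field_simp
    have htK : (0 : ℝ) < t / K := by positivity
    have hxm2 : x ^ (-m) = K ^ (2 * p) * t ^ (-(2 * p)) := by
      have hx_eq : x = (t / K) ^ q := by
        rw [hx_def, Real.div_rpow ht.le hK.le]
      have htp : (0:ℝ) < t ^ (2 * p) := Real.rpow_pos_of_pos ht _
      have hKp : (0:ℝ) < K ^ (2 * p) := Real.rpow_pos_of_pos hK _
      rw [hx_eq, ← Real.rpow_mul htK.le, hqm, Real.rpow_neg htK.le,
        Real.div_rpow ht.le hK.le, Real.rpow_neg ht.le]
      field_simp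
    have hA2p : A ^ (2 * p) = K ^ (2 * p) * m ^ m := by
      rw [hA_def, Real.mul_rpow hK.le (by positivity), ← Real.rpow_mul hm0.le]
      congr 1
      rw [hm_def]; ring
    calc 2 * Real.exp (-(t ^ q) / K ^ q) = 2 * Real.exp (-x) := by
          rw [hx_def, neg_div]
      _ ≤ 2 * (m ^ m * x ^ (-m)) := by linarith [hexpneg]
      _ = c * t ^ (-(2 * p)) := by rw [hxm2, hc_def, hA2p]; ring
  -- layer cake
  have f_nn : 0 ≤ᵐ[μ] fun ω => |X ω| := Filter.Eventually.of_forall fun ω => abs_nonneg _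
  have layer := lintegral_rpow_eq_lintegral_meas_le_mul μ f_nn hX.abs.aemeasurable hp0
  have hIoc : ∫⁻ t in Set.Ioc 0 t₀, μ {ω | t ≤ |X ω|} * ENNReal.ofReal (t ^ (p - 1))
      ≤ ENNReal.ofReal (t₀ ^ p / p) := by
    have h1 : ∀ t : ℝ, μ {ω | t ≤ |X ω|} * ENNReal.ofReal (t ^ (p - 1))
        ≤ ENNReal.ofReal (t ^ (p - 1)) := fun t =>
      (mul_le_mul_left prob_le_one _).trans_eq (one_mul _)
    calc ∫⁻ t in Set.Ioc 0 t₀, μ {ω | t ≤ |X ω|} * ENNReal.ofReal (t ^ (p - 1))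
        ≤ ∫⁻ t in Set.Ioc 0 t₀, ENNReal.ofReal (t ^ (p - 1)) := lintegral_mono h1
      _ = ENNReal.ofReal (∫ t in Set.Ioc 0 t₀, t ^ (p - 1)) := by
          rw [ofReal_integral_eq_lintegral_ofReal]
          · exact (intervalIntegral.intervalIntegrable_rpow' (by linarith)).1
          · filter_upwards [ae_restrict_mem measurableSet_Ioc] with t ht
            exact Real.rpow_nonneg ht.1.le _
      _ = ENNReal.ofReal (t₀ ^ p / p) := by
          rw [← intervalIntegral.integral_of_le ht₀0.le,
            integral_rpow (Or.inl (by linarith : (-1:ℝ) < p - 1))]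
          have hpe : p - 1 + 1 = p := by ring
          rw [hpe, Real.zero_rpow hp0.ne', sub_zero]
  have hIoi : ∫⁻ t in Set.Ioi t₀, μ {ω | t ≤ |X ω|} * ENNReal.ofReal (t ^ (p - 1))
      ≤ ENNReal.ofReal (c * t₀ ^ (-p) / p) := by
    have step : ∀ t ∈ Set.Ioi t₀, μ {ω | t ≤ |X ω|} * ENNReal.ofReal (t ^ (p - 1))
        ≤ ENNReal.ofReal (c * t ^ (-p - 1)) := by
      intro t ht
      have ht0 : 0 < t := ht₀0.trans ht
      calc μ {ω | t ≤ |X ω|} * ENNReal.ofReal (t ^ (p - 1))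
          ≤ ENNReal.ofReal (c * t ^ (-(2 * p))) * ENNReal.ofReal (t ^ (p - 1)) :=
            mul_le_mul_left
              ((htail t ht0.le).trans (ENNReal.ofReal_le_ofReal (key t ht0))) _
        _ = ENNReal.ofReal (c * t ^ (-(2 * p)) * t ^ (p - 1)) :=
            (ENNReal.ofReal_mul (by positivity)).symm
        _ = ENNReal.ofReal (c * t ^ (-p - 1)) := by
            rw [mul_assoc, ← Real.rpow_add ht0, show -(2 * p) + (p - 1) = -p - 1 by ring]
    calc ∫⁻ t in Set.Ioi t₀, μ {ω | t ≤ |X ω|} * ENNReal.ofReal (t ^ (p - 1))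
        ≤ ∫⁻ t in Set.Ioi t₀, ENNReal.ofReal (c * t ^ (-p - 1)) := by
          refine setLIntegral_mono (by measurability) step
      _ = ENNReal.ofReal (∫ t in Set.Ioi t₀, c * t ^ (-p - 1)) := by
          rw [ofReal_integral_eq_lintegral_ofReal]
          · exact (integrableOn_Ioi_rpow_of_lt (by linarith) ht₀0).const_mul c
          · filter_upwards [ae_restrict_mem measurableSet_Ioi] with t ht
            have ht0 : 0 < t := ht₀0.trans ht
            positivity
      _ = ENNReal.ofReal (c * t₀ ^ (-p) / p) := by
          rw [integral_const_mul, integral_Ioi_rpow_of_lt (by linarith) ht₀0]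
          congr 1
          have hpe : -p - 1 + 1 = -p := by ring
          rw [hpe, neg_div, div_neg, neg_neg, mul_div_assoc]
  have Isplit : ∫⁻ t in Set.Ioi (0:ℝ), μ {ω | t ≤ |X ω|} * ENNReal.ofReal (t ^ (p - 1))
      ≤ ENNReal.ofReal ((t₀ ^ p + c * t₀ ^ (-p)) / p) := by
    rw [← Set.Ioc_union_Ioi_eq_Ioi ht₀0.le,
      lintegral_union measurableSet_Ioi (Set.Ioc_disjoint_Ioi le_rfl)]
    calc _ ≤ ENNReal.ofReal (t₀ ^ p / p) + ENNReal.ofReal (c * t₀ ^ (-p) / p) :=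
          add_le_add hIoc hIoi
      _ = ENNReal.ofReal ((t₀ ^ p + c * t₀ ^ (-p)) / p) := by
          rw [← ENNReal.ofReal_add (by positivity) (by positivity), add_div]
  have main : ∫⁻ ω, ENNReal.ofReal (|X ω| ^ p) ∂μ
      ≤ ENNReal.ofReal (t₀ ^ p + c * t₀ ^ (-p)) := by
    rw [layer]
    calc ENNReal.ofReal p * ∫⁻ t in Set.Ioi (0:ℝ), μ {ω | t ≤ |X ω|} * ENNReal.ofReal (t ^ (p - 1))
        ≤ ENNReal.ofReal p * ENNReal.ofReal ((t₀ ^ p + c * t₀ ^ (-p)) / p) :=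
          mul_le_mul_right Isplit _
      _ = ENNReal.ofReal (p * ((t₀ ^ p + c * t₀ ^ (-p)) / p)) :=
          (ENNReal.ofReal_mul hp0.le).symm
      _ = ENNReal.ofReal (t₀ ^ p + c * t₀ ^ (-p)) := by
          rw [mul_comm, div_mul_cancel₀ _ hp0.ne']
  have hint : (∫ ω, |X ω| ^ p ∂μ) ≤ t₀ ^ p + c * t₀ ^ (-p) := by
    rw [integral_eq_lintegral_of_nonneg_ae
      (Filter.Eventually.of_forall fun ω => Real.rpow_nonneg (abs_nonneg _) p)
      (hX.abs.pow measurable_const).aestronglyMeasurable]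
    exact ENNReal.toReal_le_of_le_ofReal (by positivity) main
  -- final algebra
  have hB : t₀ ^ p + c * t₀ ^ (-p) ≤ (4 * A) ^ p := by
    have h1 : t₀ ^ (-p) = 2 ^ (-p) * A ^ (-p) := by
      rw [ht₀_def, Real.mul_rpow (by norm_num) hA0.le]
    have h2 : A ^ (2 * p) * A ^ (-p) = A ^ p := by
      rw [← Real.rpow_add hA0, show 2 * p + -p = p by ring]
    have h3 : (4 * A) ^ p = 4 ^ p * A ^ p := Real.mul_rpow (by norm_num) hA0.le
    have h4 : t₀ ^ p = 2 ^ p * A ^ p := by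
      rw [ht₀_def, Real.mul_rpow (by norm_num) hA0.le]
    have h5 : c * t₀ ^ (-p) = 2 * 2 ^ (-p) * A ^ p := by
      rw [hc_def, h1, ← h2]; ring
    have e1 : (2:ℝ) ≤ 2 ^ p := by
      calc (2:ℝ) = 2 ^ (1:ℝ) := (Real.rpow_one 2).symm
        _ ≤ 2 ^ p := Real.rpow_le_rpow_of_exponent_le one_le_two hp
    have e2 : (2:ℝ) ^ (-p) ≤ 2⁻¹ := by
      calc (2:ℝ) ^ (-p) ≤ 2 ^ (-1:ℝ) :=
            Real.rpow_le_rpow_of_exponent_le one_le_two (by linarith)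
        _ = 2⁻¹ := by rw [Real.rpow_neg_one]
    have e3 : (4:ℝ) ^ p = 2 ^ p * 2 ^ p := by
      rw [show (4:ℝ) = 2 * 2 by norm_num, Real.mul_rpow (by norm_num) (by norm_num)]
    have hApos : (0:ℝ) < A ^ p := Real.rpow_pos_of_pos hA0 p
    rw [h4, h5, h3, e3]
    have a3 : (2:ℝ) * 2 ^ p ≤ 2 ^ p * 2 ^ p :=
      mul_le_mul_of_nonneg_right e1 (Real.rpow_pos_of_pos two_pos p).le
    have coef : (2:ℝ) ^ p + 2 * 2 ^ (-p) ≤ 2 ^ p * 2 ^ p := by linarith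
    nlinarith [mul_le_mul_of_nonneg_right coef hApos.le]
  have h0 : 0 ≤ ∫ ω, |X ω| ^ p ∂μ :=
    integral_nonneg fun ω => Real.rpow_nonneg (abs_nonneg _) p
  have hfinal : (∫ ω, |X ω| ^ p ∂μ) ^ (1 / p) ≤ 4 * A := by
    calc (∫ ω, |X ω| ^ p ∂μ) ^ (1 / p) ≤ ((4 * A) ^ p) ^ (1 / p) :=
          Real.rpow_le_rpow h0 (hint.trans hB) (by positivity)
      _ = 4 * A := by
          rw [← Real.rpow_mul (by positivity), mul_one_div, div_self hp0.ne', Real.rpow_one]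
  have hAeq : 4 * A = 4 * (2 / q) ^ (1 / q) * K * p ^ (1 / q) := by
    rw [hA_def, hm_def, show 2 * p / q = 2 / q * p by ring,
      Real.mul_rpow (by positivity) hp0.le]
    ring
  rw [hAeq] at hfinal
  exact hfinal
end

section
/- Let (a_n)_{n≥0} be a nonnegative real sequence, μ > 0, c ≥ 0, and stepsizes α_n = ι/(n+κ)^ξ with ξ ∈ (0,1), ι, κ > 0, satisfying a_{n+1} ≤ (1 − α_n μ)a_n + α_n² c with α_0 μ ≤ 1. Then there is a constant C (depending on ι, μ, c, ξ, κ) such that a_n ≤ a_0·exp(−(μι/(1−ξ))·((n+κ)^{1−ξ} − κ^{1−ξ})) + C/(n+κ)^ξ for all n ≥ 0, provided κ is sufficiently large. -/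
set_option maxHeartbeats 1000000


open Real

private lemma aux1 {x p : ℝ} (hx : 0 < x) (hp0 : 0 ≤ p) (hp1 : p ≤ 1) :
    (x + 1) ^ p ≤ x ^ p + p * x ^ (p - 1) := by
  have hinv : (0:ℝ) ≤ 1/x := by positivity
  have hb : (1 + 1/x) ^ p ≤ 1 + p * (1/x) :=
    rpow_one_add_le_one_add_mul_self (by linarith) hp0 hp1
  have h1 : x + 1 = x * (1 + 1/x) := by field_simp
  have h2 : (x + 1) ^ p = x ^ p * (1 + 1/x) ^ p := by
    rw [h1, Real.mul_rpow hx.le (by positivity)]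
  have h3 : x ^ p * (1 + 1/x) ^ p ≤ x ^ p * (1 + p * (1/x)) :=
    mul_le_mul_of_nonneg_left hb (Real.rpow_nonneg hx.le p)
  have h4 : x ^ p * (1 + p * (1/x)) = x ^ p + p * x ^ (p - 1) := by
    rw [Real.rpow_sub hx, Real.rpow_one]
    field_simp
  linarith [h2, h3, h4]

private lemma aux2 {x q : ℝ} (hx : 0 < x) (hq0 : 0 ≤ q) (hq1 : q ≤ 1) :
    x ^ (-q) - q * x ^ (-q - 1) ≤ (x + 1) ^ (-q) := by
  have hinv : (0:ℝ) ≤ 1/x := by positivity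
  have hb : (1 + 1/x) ^ q ≤ 1 + q * (1/x) :=
    rpow_one_add_le_one_add_mul_self (by linarith) hq0 hq1
  have hx1 : (0:ℝ) < x + 1 := by linarith
  have h11 : (0:ℝ) < 1 + 1/x := by linarith
  have h2 : (x + 1) ^ (-q) = x ^ (-q) * (1 + 1/x) ^ (-q) := by
    have h1 : x + 1 = x * (1 + 1/x) := by field_simp
    rw [h1, Real.mul_rpow hx.le h11.le]
  have hbq : (0:ℝ) < (1 + 1/x) ^ q := Real.rpow_pos_of_pos h11 q
  have h3 : (1 : ℝ) - q * (1/x) ≤ (1 + 1/x) ^ (-q) := by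
    have hpos : (0:ℝ) < (1 + 1/x) ^ (-q) := Real.rpow_pos_of_pos h11 (-q)
    rcases le_or_gt (1 - q * (1/x)) 0 with h | h
    · linarith
    · rw [Real.rpow_neg h11.le]
      rw [le_inv_comm₀ h hbq]
      have hsq : (1 + q * (1/x)) * (1 - q * (1/x)) ≤ 1 := by
        nlinarith [sq_nonneg (q * (1/x))]
      have h1q : (0:ℝ) < 1 + q * (1/x) := by positivity
      calc (1 + 1/x) ^ q ≤ 1 + q * (1/x) := hb
        _ ≤ (1 - q * (1/x))⁻¹ := by
            rw [le_inv_comm₀ h1q (by positivity)]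
            have ht : (1 + q * (1/x)) * (1 + q * (1/x))⁻¹ = 1 := mul_inv_cancel₀ h1q.ne'
            nlinarith [ht, inv_pos.mpr h1q]
  have h4 : x ^ (-q) * (1 - q * (1/x)) ≤ x ^ (-q) * (1 + 1/x) ^ (-q) :=
    mul_le_mul_of_nonneg_left h3 (Real.rpow_nonneg hx.le _)
  have h5 : x ^ (-q) * (1 - q * (1/x)) = x ^ (-q) - q * x ^ (-q - 1) := by
    rw [Real.rpow_sub hx, Real.rpow_one]
    field_simp
  rw [h2]
  linarith [h4, h5]

theorem stmt_11 (ξ ι μ c : ℝ) (hξ : ξ ∈ Set.Ioo (0 : ℝ) 1) (hι : 0 < ι) (hμ : 0 < μ)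
    (hc : 0 ≤ c) :
    ∃ κ₀ : ℝ, 0 < κ₀ ∧ ∀ κ : ℝ, κ₀ ≤ κ → ∃ C : ℝ,
      ∀ a : ℕ → ℝ, (∀ n, 0 ≤ a n) → (ι / κ ^ ξ) * μ ≤ 1 →
        (∀ n : ℕ, a (n + 1) ≤ (1 - (ι / ((n : ℝ) + κ) ^ ξ) * μ) * a n
          + (ι / ((n : ℝ) + κ) ^ ξ) ^ 2 * c) →
        ∀ n : ℕ, a n ≤
          a 0 * Real.exp (-(μ * ι / (1 - ξ)) * (((n : ℝ) + κ) ^ (1 - ξ) - κ ^ (1 - ξ)))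
            + C / ((n : ℝ) + κ) ^ ξ := by
  obtain ⟨hξ0, hξ1⟩ := hξ
  have h1ξ : (0:ℝ) < 1 - ξ := by linarith
  set b : ℝ := 2 * ξ / (μ * ι) with hbdef
  have hbnn : 0 ≤ b := by positivity
  refine ⟨max 1 (b ^ (1-ξ)⁻¹), lt_of_lt_of_le one_pos (le_max_left _ _), ?_⟩
  intro κ hκ
  have hκ1 : (1:ℝ) ≤ κ := le_trans (le_max_left _ _) hκ
  have hκ0 : (0:ℝ) < κ := by linarith
  have hkey : ∀ x : ℝ, κ ≤ x → ξ * x ^ (ξ - 1) ≤ μ * ι / 2 := by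
    intro x hxκ
    have hx0 : (0:ℝ) < x := by linarith
    have h1 : b ^ (1-ξ)⁻¹ ≤ x := le_trans (le_trans (le_max_right _ _) hκ) hxκ
    have h2 : (b ^ (1-ξ)⁻¹) ^ (1-ξ) = b := by
      rw [← Real.rpow_mul hbnn, inv_mul_cancel₀ h1ξ.ne', Real.rpow_one]
    have h3 : b ≤ x ^ (1-ξ) := by
      rw [← h2]
      exact Real.rpow_le_rpow (Real.rpow_nonneg hbnn _) h1 h1ξ.le
    have ht : (0:ℝ) < x ^ (1-ξ) := Real.rpow_pos_of_pos hx0 _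
    have h4 : x ^ (ξ - 1) = (x ^ (1-ξ))⁻¹ := by
      rw [show ξ - 1 = -(1-ξ) by ring, Real.rpow_neg hx0.le]
    rw [h4, mul_inv_le_iff₀ ht]
    have h5 : μ * ι * b ≤ μ * ι * x ^ (1-ξ) :=
      mul_le_mul_of_nonneg_left h3 (by positivity)
    have h6 : μ * ι * b = 2 * ξ := by
      rw [hbdef]; field_simp
    nlinarith
  refine ⟨2 * ι * c / μ, ?_⟩
  intro a ha hα0 hrec
  have hC0 : (0:ℝ) ≤ 2 * ι * c / μ := by positivity
  set K : ℝ := μ * ι / (1 - ξ) with hK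
  have hK0 : (0:ℝ) ≤ K := by positivity
  have hκξ : (0:ℝ) < κ ^ ξ := Real.rpow_pos_of_pos hκ0 ξ
  intro n
  induction n with
  | zero =>
    have e0 : ((0:ℕ):ℝ) + κ = κ := by norm_num
    rw [e0, sub_self, mul_zero, Real.exp_zero, mul_one]
    have : (0:ℝ) ≤ (2 * ι * c / μ) / κ ^ ξ := by positivity
    linarith
  | succ n ih =>
    have hn0 : (0:ℝ) ≤ (n:ℝ) := Nat.cast_nonneg n
    set x : ℝ := (n:ℝ) + κ with hxdef
    have hx0 : (0:ℝ) < x := by rw [hxdef]; linarith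
    have hxκ : κ ≤ x := by rw [hxdef]; linarith
    have hxξ : (0:ℝ) < x ^ ξ := Real.rpow_pos_of_pos hx0 ξ
    have hmono : κ ^ ξ ≤ x ^ ξ := Real.rpow_le_rpow hκ0.le hxκ hξ0.le
    have hαle : (ι / x ^ ξ) * μ ≤ 1 := by
      have hdd : ι / x ^ ξ ≤ ι / κ ^ ξ := by gcongr
      nlinarith
    have hαpos : (0:ℝ) < ι / x ^ ξ := by positivity
    have h1α : (0:ℝ) ≤ 1 - (ι / x ^ ξ) * μ := by linarith
    -- cast the goal
    have ecast : ((n:ℝ) + 1) + κ = x + 1 := by rw [hxdef]; ring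
    push_cast
    rw [ecast]
    -- part A : exponential contraction
    have hA : (1 - (ι / x ^ ξ) * μ) * Real.exp (-K * (x ^ (1-ξ) - κ ^ (1-ξ)))
        ≤ Real.exp (-K * ((x+1) ^ (1-ξ) - κ ^ (1-ξ))) := by
      have e1 : 1 - (ι / x ^ ξ) * μ ≤ Real.exp (-((ι / x ^ ξ) * μ)) := by
        have := Real.add_one_le_exp (-((ι / x ^ ξ) * μ)); linarith
      have e2 : (1 - (ι / x ^ ξ) * μ) * Real.exp (-K * (x ^ (1-ξ) - κ ^ (1-ξ)))
          ≤ Real.exp (-((ι / x ^ ξ) * μ)) * Real.exp (-K * (x ^ (1-ξ) - κ ^ (1-ξ))) :=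
        mul_le_mul_of_nonneg_right e1 (Real.exp_pos _).le
      rw [← Real.exp_add] at e2
      refine e2.trans (Real.exp_le_exp.mpr ?_)
      have e3 : (x+1) ^ (1-ξ) ≤ x ^ (1-ξ) + (1-ξ) * x ^ ((1-ξ) - 1) :=
        aux1 hx0 h1ξ.le (by linarith)
      have e4 : x ^ ((1-ξ) - 1) = (x ^ ξ)⁻¹ := by
        rw [show (1-ξ) - 1 = -ξ by ring, Real.rpow_neg hx0.le]
      have e5 : K * (1-ξ) = μ * ι := by
        rw [hK]; field_simp
      have e6 : ι / x ^ ξ = ι * (x ^ ξ)⁻¹ := div_eq_mul_inv _ _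
      have e7 : K * ((x+1) ^ (1-ξ)) ≤ K * (x ^ (1-ξ) + (1-ξ) * x ^ ((1-ξ) - 1)) :=
        mul_le_mul_of_nonneg_left e3 hK0
      rw [e4] at e7
      rw [e6]
      nlinarith [e7, e5]
    -- part B : error recursion
    have hB : (1 - (ι / x ^ ξ) * μ) * ((2 * ι * c / μ) / x ^ ξ) + (ι / x ^ ξ) ^ 2 * c
        ≤ (2 * ι * c / μ) / (x+1) ^ ξ := by
      have i1 : x ^ (-ξ) = (x ^ ξ)⁻¹ := Real.rpow_neg hx0.le ξ
      have ht : (0:ℝ) < x ^ (-ξ) := Real.rpow_pos_of_pos hx0 _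
      have i2 : x ^ (-ξ - 1) = x ^ (ξ - 1) * (x ^ (-ξ) * x ^ (-ξ)) := by
        rw [show -ξ - 1 = (ξ - 1) + (-ξ + -ξ) by ring, Real.rpow_add hx0, Real.rpow_add hx0]
      have i3 : x ^ (-ξ) - ξ * x ^ (-ξ - 1) ≤ (x+1) ^ (-ξ) := aux2 hx0 hξ0.le hξ1.le
      rw [i2] at i3
      have hx1 : (0:ℝ) < x + 1 := by linarith
      have i4 : (2 * ι * c / μ) / (x+1) ^ ξ = (2 * ι * c / μ) * (x+1) ^ (-ξ) := by
        rw [Real.rpow_neg hx1.le, div_eq_mul_inv]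
      have i5 : ι / x ^ ξ = ι * x ^ (-ξ) := by
        rw [i1, div_eq_mul_inv]
      have i6 : (2 * ι * c / μ) / x ^ ξ = (2 * ι * c / μ) * x ^ (-ξ) := by
        rw [i1, div_eq_mul_inv]
      have hs0 : (0:ℝ) ≤ x ^ (ξ - 1) := (Real.rpow_pos_of_pos hx0 _).le
      have hk : ξ * x ^ (ξ - 1) ≤ μ * ι / 2 := hkey x hxκ
      have hCμ : (2 * ι * c / μ) * μ = 2 * ι * c := by field_simp
      have i7 : (2 * ι * c / μ) * (x ^ (-ξ) - ξ * (x ^ (ξ - 1) * (x ^ (-ξ) * x ^ (-ξ))))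
          ≤ (2 * ι * c / μ) * (x+1) ^ (-ξ) := by
        apply mul_le_mul_of_nonneg_left _ hC0
        linarith [i3]
      rw [i4, i5, i6]
      have i8 : (ξ * x ^ (ξ - 1)) * (x ^ (-ξ) * x ^ (-ξ)) ≤ (μ * ι / 2) * (x ^ (-ξ) * x ^ (-ξ)) :=
        mul_le_mul_of_nonneg_right hk (by positivity)
      have i9 : (2 * ι * c / μ) * ((ξ * x ^ (ξ - 1)) * (x ^ (-ξ) * x ^ (-ξ)))
          ≤ (2 * ι * c / μ) * ((μ * ι / 2) * (x ^ (-ξ) * x ^ (-ξ))) :=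
        mul_le_mul_of_nonneg_left i8 hC0
      have hE1 : (2 * ι * c / μ) * ((μ * ι / 2) * (x ^ (-ξ) * x ^ (-ξ)))
          = (ι * x ^ (-ξ)) ^ 2 * c := by
        field_simp
      have hE2 : (1 - ι * x ^ (-ξ) * μ) * ((2 * ι * c / μ) * x ^ (-ξ))
          = (2 * ι * c / μ) * x ^ (-ξ) - 2 * ((ι * x ^ (-ξ)) ^ 2 * c) := by
        field_simp
      linarith [i7, i9, hE1, hE2]
    -- combine
    have p1 : a (n+1) ≤ (1 - (ι / x ^ ξ) * μ) * a n + (ι / x ^ ξ) ^ 2 * c := hrec n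
    have p2 : (1 - (ι / x ^ ξ) * μ) * a n
        ≤ (1 - (ι / x ^ ξ) * μ) * (a 0 * Real.exp (-K * (x ^ (1-ξ) - κ ^ (1-ξ)))
            + (2 * ι * c / μ) / x ^ ξ) :=
      mul_le_mul_of_nonneg_left ih h1α
    have p3 : a 0 * ((1 - (ι / x ^ ξ) * μ) * Real.exp (-K * (x ^ (1-ξ) - κ ^ (1-ξ))))
        ≤ a 0 * Real.exp (-K * ((x+1) ^ (1-ξ) - κ ^ (1-ξ))) :=
      mul_le_mul_of_nonneg_left hA (ha 0)
    have p2' : (1 - (ι / x ^ ξ) * μ) * (a 0 * Real.exp (-K * (x ^ (1-ξ) - κ ^ (1-ξ)))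
            + (2 * ι * c / μ) / x ^ ξ)
        = a 0 * ((1 - (ι / x ^ ξ) * μ) * Real.exp (-K * (x ^ (1-ξ) - κ ^ (1-ξ))))
          + (1 - (ι / x ^ ξ) * μ) * ((2 * ι * c / μ) / x ^ ξ) := by ring
    linarith [p1, p2, p2', p3, hB]
end

section
/- Let (a_n)_{n≥0} be a nonnegative real sequence, μ > 0, c ≥ 0, and stepsizes α_n = ι/(n+κ) with ιμ > 1 and κ large enough that α_0 μ ≤ 1, satisfying a_{n+1} ≤ (1 − α_n μ)a_n + α_n² c. Then a_n ≤ a_0·(κ/(n+κ))^{ιμ} + (4e·ι²c/(ιμ − 1))·1/(n+κ) for all n ≥ 0. -/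
open Real

theorem stmt_12 (ι κ μ c : ℝ) (hμ : 0 < μ) (hιμ : 1 < ι * μ) (hκ : 0 < κ) (hc : 0 ≤ c)
    (h0 : (ι / κ) * μ ≤ 1)
    (a : ℕ → ℝ) (ha : ∀ n, 0 ≤ a n)
    (hrec : ∀ n : ℕ, a (n + 1) ≤ (1 - (ι / ((n : ℝ) + κ)) * μ) * a n
      + (ι / ((n : ℝ) + κ)) ^ 2 * c) :
    ∀ n : ℕ, a n ≤ a 0 * (κ / ((n : ℝ) + κ)) ^ (ι * μ)
      + (4 * Real.exp 1 * ι ^ 2 * c / (ι * μ - 1)) * (1 / ((n : ℝ) + κ)) := by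
  set β := ι * μ with hβ
  set C := 4 * Real.exp 1 * ι ^ 2 * c / (β - 1) with hCdef
  have hβ1 : 1 < β := hιμ
  have hC0 : 0 ≤ C := by
    apply div_nonneg _ (by linarith)
    have := Real.exp_pos 1
    positivity
  have he1 : (1:ℝ) ≤ Real.exp 1 := by
    have := Real.add_one_le_exp (1:ℝ); linarith
  have hCb : ι ^ 2 * c ≤ C * (β - 1) := by
    have : C * (β - 1) = 4 * Real.exp 1 * ι ^ 2 * c := by
      rw [hCdef, div_mul_cancel₀]
      linarith
    rw [this]
    nlinarith [sq_nonneg ι, mul_nonneg (sq_nonneg ι) hc]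
  have hβκ : β ≤ κ := by
    have h1 : ι * μ / κ ≤ 1 := by rwa [div_mul_eq_mul_div] at h0
    calc β = ι * μ / κ * κ := by field_simp; exact hβ
    _ ≤ 1 * κ := by exact mul_le_mul_of_nonneg_right h1 hκ.le
    _ = κ := one_mul κ
  intro n
  induction n with
  | zero =>
    simp only [Nat.cast_zero, zero_add]
    rw [div_self hκ.ne', Real.one_rpow]
    have : 0 ≤ C * (1 / κ) := mul_nonneg hC0 (by positivity)
    linarith
  | succ n ih =>
    set t : ℝ := (n : ℝ) + κ with htdef
    have ht : 0 < t := by positivity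
    have hβt : β ≤ t := by
      have : (0:ℝ) ≤ n := Nat.cast_nonneg n
      linarith
    have ht1 : 0 < t + 1 := by linarith
    have hfac : 0 ≤ 1 - β / t := by
      rw [sub_nonneg, div_le_one ht]; exact hβt
    have hstep : a (n + 1) ≤ (1 - β / t) * a n + ι ^ 2 * c / t ^ 2 := by
      have := hrec n
      have e1 : (ι / t) * μ = β / t := by rw [hβ]; ring
      have e2 : (ι / t) ^ 2 * c = ι ^ 2 * c / t ^ 2 := by
        rw [div_pow]; ring
      rw [e1, e2] at this
      exact this
    have hcast : ((n + 1 : ℕ) : ℝ) + κ = t + 1 := by push_cast; ring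
    rw [hcast]
    -- first key: rpow part
    have hrp : (1 - β / t) * (κ / t) ^ β ≤ (κ / (t + 1)) ^ β := by
      have hbern : 1 - β / (t + 1) ≤ (t / (t + 1)) ^ β := by
        have := one_add_mul_self_le_rpow_one_add (s := -(1 / (t + 1)))
          (p := β) (by
            have : 0 < 1 / (t + 1) := by positivity
            have h2 : 1 / (t + 1) ≤ 1 := by
              rw [div_le_one ht1]; linarith
            linarith) hβ1.le
        have e : 1 + -(1 / (t + 1)) = t / (t + 1) := by field_simp; ring
        rw [e] at this
        calc 1 - β / (t + 1) = 1 + β * -(1 / (t + 1)) := by ring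
        _ ≤ (t / (t + 1)) ^ β := this
      have hmono : 1 - β / t ≤ 1 - β / (t + 1) := by
        have : β / (t + 1) ≤ β / t := by
          apply div_le_div_of_nonneg_left (by linarith) ht (by linarith)
        linarith
      calc (1 - β / t) * (κ / t) ^ β
          ≤ (t / (t + 1)) ^ β * (κ / t) ^ β := by
            apply mul_le_mul_of_nonneg_right (le_trans hmono hbern)
            exact Real.rpow_nonneg (by positivity) β
      _ = (t / (t + 1) * (κ / t)) ^ β := by
            rw [← Real.mul_rpow (by positivity) (by positivity)]
      _ = (κ / (t + 1)) ^ β := by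
            congr 1; field_simp
    -- second key: constant part
    have hconst : (1 - β / t) * (C / t) + ι ^ 2 * c / t ^ 2 ≤ C / (t + 1) := by
      have h1 : (1 - β / t) * (C / t) + ι ^ 2 * c / t ^ 2
          = ((t - β) * C + ι ^ 2 * c) / t ^ 2 := by
        field_simp
      rw [h1, div_le_div_iff₀ (by positivity) ht1]
      nlinarith [mul_nonneg ht.le (sub_nonneg.2 hCb), hCb, hC0, ht]
    calc a (n + 1) ≤ (1 - β / t) * a n + ι ^ 2 * c / t ^ 2 := hstep
    _ ≤ (1 - β / t) * (a 0 * (κ / t) ^ β + C * (1 / t)) + ι ^ 2 * c / t ^ 2 := by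
        apply add_le_add_left
        exact mul_le_mul_of_nonneg_left ih hfac
    _ = a 0 * ((1 - β / t) * (κ / t) ^ β) + ((1 - β / t) * (C / t) + ι ^ 2 * c / t ^ 2) := by
        ring
    _ ≤ a 0 * (κ / (t + 1)) ^ β + C / (t + 1) := by
        apply add_le_add
        · exact mul_le_mul_of_nonneg_left hrp (ha 0)
        · exact hconst
    _ = a 0 * (κ / (t + 1)) ^ β + C * (1 / (t + 1)) := by ring
end

section
/- Let u be a real random variable with E[u²] > 0, independent of a real random variable ζ, and let l : ℝ → ℝ be differentiable with l′ nondecreasing, l′(0) = 0, E[l′(ζ)] well-defined, and suppose there exist Δ_l > Δ_ζ > 0, μ_l > 0 with P(|ζ| ≤ Δ_ζ) > 0 and l′(t) − l′(t′) ≥ μ_l(t − t′) whenever −Δ_l ≤ t′ ≤ t ≤ Δ_l. If E[u] = 0, then E[l′(u + ζ)·u] > 0. -/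
open MeasureTheory

theorem stmt_14 {Ω : Type*} [MeasurableSpace Ω] (μ : Measure Ω) [IsProbabilityMeasure μ]
    (u ζ : Ω → ℝ) (hmu : Measurable u) (hmζ : Measurable ζ)
    (hindep : ProbabilityTheory.IndepFun u ζ μ)
    (l l' : ℝ → ℝ) (hderiv : ∀ t, HasDerivAt l (l' t) t)
    (hmono : Monotone l') (h0 : l' 0 = 0)
    (Δl Δζ μl : ℝ) (h1 : 0 < Δζ) (h2 : Δζ < Δl) (hμl : 0 < μl)
    (hζpos : 0 < μ {ω | |ζ ω| ≤ Δζ})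
    (hsm : ∀ t' t : ℝ, -Δl ≤ t' → t' ≤ t → t ≤ Δl → μl * (t - t') ≤ l' t - l' t')
    (hu2 : 0 < ∫ ω, (u ω) ^ 2 ∂μ)
    (huint : Integrable u μ) (humean : ∫ ω, u ω ∂μ = 0)
    (hζint : Integrable (fun ω => l' (ζ ω)) μ)
    (hprodint : Integrable (fun ω => l' (u ω + ζ ω) * u ω) μ) :
    0 < ∫ ω, l' (u ω + ζ ω) * u ω ∂μ := by
  have hml' : Measurable l' := hmono.measurable
  -- independence of l'(ζ) and u
  have hindep' : ProbabilityTheory.IndepFun (fun ω => l' (ζ ω)) u μ :=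
    (hindep.symm).comp hml' measurable_id
  have hζuint : Integrable (fun ω => l' (ζ ω) * u ω) μ :=
    hindep'.integrable_mul hζint huint
  have hzero : ∫ ω, l' (ζ ω) * u ω ∂μ = 0 := by
    have := hindep'.integral_mul_eq_mul_integral hζint.1 huint.1
    simp only [Pi.mul_apply] at this
    rw [this, humean, mul_zero]
  -- the nonnegative function g
  set g : Ω → ℝ := fun ω => (l' (u ω + ζ ω) - l' (ζ ω)) * u ω with hg
  have hgnn : ∀ ω, 0 ≤ g ω := by
    intro ω
    show 0 ≤ (l' (u ω + ζ ω) - l' (ζ ω)) * u ω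
    rcases le_total 0 (u ω) with h | h
    · exact mul_nonneg (sub_nonneg.2 (hmono (by linarith))) h
    · have hA : l' (u ω + ζ ω) - l' (ζ ω) ≤ 0 := sub_nonpos.2 (hmono (by linarith))
      nlinarith
  have hgint : Integrable g μ := by
    have : g = fun ω => l' (u ω + ζ ω) * u ω - l' (ζ ω) * u ω := by
      funext ω; simp [hg]; ring
    rw [this]; exact hprodint.sub hζuint
  have hgI : ∫ ω, g ω ∂μ = ∫ ω, l' (u ω + ζ ω) * u ω ∂μ := by
    have : g = fun ω => l' (u ω + ζ ω) * u ω - l' (ζ ω) * u ω := by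
      funext ω; simp [hg]; ring
    rw [this, integral_sub hprodint hζuint, hzero, sub_zero]
  rw [← hgI]
  -- strict positivity on S
  by_contra hle
  push_neg at hle
  have hInn : 0 ≤ ∫ ω, g ω ∂μ := integral_nonneg hgnn
  have hIzero : ∫ ω, g ω ∂μ = 0 := le_antisymm hle hInn
  have hgae : g =ᵐ[μ] 0 :=
    (integral_eq_zero_iff_of_nonneg hgnn hgint).1 hIzero
  -- the set where g must be positive
  have huneq : 0 < μ {ω | u ω ≠ 0} := by
    by_contra h
    push_neg at h
    have h' : μ {ω | u ω ≠ 0} = 0 := le_antisymm h (zero_le)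
    have : (fun ω => (u ω) ^ 2) =ᵐ[μ] 0 := by
      filter_upwards [(ae_iff.2 h' : ∀ᵐ ω ∂μ, u ω = 0)] with ω hω
      simp [hω]
    rw [integral_congr_ae this] at hu2
    simp at hu2
  have hSmeas : μ ({ω | u ω ≠ 0} ∩ {ω | |ζ ω| ≤ Δζ}) > 0 := by
    have hsU : {ω | u ω ≠ 0} = u ⁻¹' {x | x ≠ 0} := rfl
    have hsZ : {ω | |ζ ω| ≤ Δζ} = ζ ⁻¹' {x | |x| ≤ Δζ} := rfl
    have hmU : MeasurableSet {x : ℝ | x ≠ 0} := (measurableSet_singleton 0).compl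
    have hmZ : MeasurableSet {x : ℝ | |x| ≤ Δζ} :=
      measurableSet_le (measurable_id.abs) measurable_const
    have := hindep.measure_inter_preimage_eq_mul _ _ hmU hmZ
    rw [hsU, hsZ, this]
    exact ENNReal.mul_pos (by rw [← hsU]; exact huneq.ne') (by rw [← hsZ]; exact hζpos.ne')
  -- g is positive on this set
  have hgpos : ∀ ω ∈ {ω | u ω ≠ 0} ∩ {ω | |ζ ω| ≤ Δζ}, 0 < g ω := by
    rintro ω ⟨hune, hζb⟩
    simp only [Set.mem_setOf_eq] at hune hζb
    have hζ1 : -Δζ ≤ ζ ω := (abs_le.1 hζb).1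
    have hζ2 : ζ ω ≤ Δζ := (abs_le.1 hζb).2
    rcases lt_or_gt_of_ne hune with hneg | hpos
    · -- u ω < 0
      set d := min (-u ω) (Δl - Δζ) with hd
      have hd0 : 0 < d := lt_min (by linarith) (by linarith)
      have h1' : l' (u ω + ζ ω) ≤ l' (ζ ω - d) :=
        hmono (by have := min_le_left (-u ω) (Δl - Δζ); linarith)
      have h2' : μl * d ≤ l' (ζ ω) - l' (ζ ω - d) := by
        have := hsm (ζ ω - d) (ζ ω)
          (by have := min_le_right (-u ω) (Δl - Δζ); linarith)
          (by linarith) (by linarith)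
        linarith
      have : l' (u ω + ζ ω) - l' (ζ ω) ≤ -(μl * d) := by linarith
      have : 0 < (-(μl * d)) * u ω := by
        apply mul_pos_of_neg_of_neg (by nlinarith) hneg
      calc (0:ℝ) < (-(μl * d)) * u ω := this
        _ ≤ (l' (u ω + ζ ω) - l' (ζ ω)) * u ω := by
            apply mul_le_mul_of_nonpos_right ?_ hneg.le
            linarith
    · -- u ω > 0
      set d := min (u ω) (Δl - Δζ) with hd
      have hd0 : 0 < d := lt_min hpos (by linarith)
      have h1' : l' (ζ ω + d) ≤ l' (u ω + ζ ω) :=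
        hmono (by have := min_le_left (u ω) (Δl - Δζ); linarith)
      have h2' : μl * d ≤ l' (ζ ω + d) - l' (ζ ω) := by
        have := hsm (ζ ω) (ζ ω + d) (by linarith) (by linarith)
          (by have := min_le_right (u ω) (Δl - Δζ); linarith)
        linarith
      have hlb : μl * d ≤ l' (u ω + ζ ω) - l' (ζ ω) := by linarith
      calc (0:ℝ) < (μl * d) * u ω := by positivity
        _ ≤ (l' (u ω + ζ ω) - l' (ζ ω)) * u ω := mul_le_mul_of_nonneg_right hlb hpos.le
  -- contradiction
  have hsub : ({ω | u ω ≠ 0} ∩ {ω | |ζ ω| ≤ Δζ}) ⊆ {ω | ¬ g ω = 0} := by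
    intro ω hω
    exact (hgpos ω hω).ne'
  have : μ ({ω | u ω ≠ 0} ∩ {ω | |ζ ω| ≤ Δζ}) = 0 :=
    measure_mono_null hsub (ae_iff.1 hgae)
  exact absurd this hSmeas.ne'
end

section
/- Fix τ ∈ (0,1), Δ_τ, μ_τ, L_τ, σ_x > 0. Let x be a random vector in ℝ^d with E[x xᵀ] = I_d, ‖x‖ σ_x-sub-exponential, and let F_x : ℝ → [0,1] be a (measurable-in-x) family of CDFs with F_x(0) = τ and F_x(t) − F_x(t′) ≥ μ_τ(t − t′) for all −Δ_τ ≤ t′ ≤ t ≤ Δ_τ. Define ∇f_τ(θ) = E[(F_x(xᵀθ − xᵀθ*) − τ)·x]. Then for all θ′, θ″ with ‖θ′−θ*‖ ≤ Δ_τ/Δ_x and ‖θ″−θ*‖ ≤ Δ_τ/Δ_x, where Δ_x = σ_x·ln(8E[‖x‖⁴]): ⟨θ′ − θ″, ∇f_τ(θ′) − ∇f_τ(θ″)⟩ ≥ (μ_τ/2)·‖θ′ − θ″‖². -/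
open Real MeasureTheory RealInnerProductSpace

set_option maxHeartbeats 1000000 in
theorem stmt_16 {Ω : Type*} [MeasurableSpace Ω] (μ : Measure Ω) [IsProbabilityMeasure μ]
    (d : ℕ) (x : Ω → EuclideanSpace ℝ (Fin d)) (θs : EuclideanSpace ℝ (Fin d))
    (F : EuclideanSpace ℝ (Fin d) → ℝ → ℝ)
    (τ Δτ μτ Lτ σx : ℝ)
    (hτ1 : 0 < τ) (hτ2 : τ < 1) (hΔτ : 0 < Δτ) (hμτ : 0 < μτ) (hLτ : 0 < Lτ) (hσx : 0 < σx)
    (hmx : Measurable x)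
    (hiso : ∀ u v : EuclideanSpace ℝ (Fin d), ∫ ω, ⟪x ω, u⟫ * ⟪x ω, v⟫ ∂μ = ⟪u, v⟫)
    (htail : ∀ t : ℝ, 0 ≤ t → μ {ω | t < ‖x ω‖} ≤ ENNReal.ofReal (2 * Real.exp (-t / σx)))
    (hint4 : Integrable (fun ω => ‖x ω‖ ^ 4) μ)
    (hF01 : ∀ v t, F v t ∈ Set.Icc (0 : ℝ) 1)
    (hFmono : ∀ v, Monotone (F v))
    (hF0 : ∀ v, F v 0 = τ)
    (hFsm : ∀ v, ∀ t' t : ℝ, -Δτ ≤ t' → t' ≤ t → t ≤ Δτ → μτ * (t - t') ≤ F v t - F v t')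
    (hmeasF : ∀ θ : EuclideanSpace ℝ (Fin d),
      AEStronglyMeasurable (fun ω => (F (x ω) (⟪x ω, θ⟫ - ⟪x ω, θs⟫) - τ) • x ω) μ)
    (θ' θ'' : EuclideanSpace ℝ (Fin d))
    (h1 : ‖θ' - θs‖ ≤ Δτ / (σx * Real.log (8 * ∫ ω, ‖x ω‖ ^ 4 ∂μ)))
    (h2 : ‖θ'' - θs‖ ≤ Δτ / (σx * Real.log (8 * ∫ ω, ‖x ω‖ ^ 4 ∂μ))) :
    μτ / 2 * ‖θ' - θ''‖ ^ 2 ≤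
      ⟪θ' - θ'', (∫ ω, (F (x ω) (⟪x ω, θ'⟫ - ⟪x ω, θs⟫) - τ) • x ω ∂μ) -
        ∫ ω, (F (x ω) (⟪x ω, θ''⟫ - ⟪x ω, θs⟫) - τ) • x ω ∂μ⟫ := by
  set c := ∫ ω, ‖x ω‖ ^ 4 ∂μ with hc
  set Δx := σx * Real.log (8 * c) with hΔxdef
  set u := θ' - θ'' with hu
  clear_value c Δx u
  by_cases hu0 : u = 0
  · rw [hu0]
    simp
  -- u ≠ 0 henceforth
  have hnu : 0 < ‖u‖ := norm_pos_iff.mpr hu0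
  -- basic integrability facts
  have hmx2 : Measurable fun ω => ‖x ω‖ ^ 2 := hmx.norm.pow_const 2
  have hx2int : Integrable (fun ω => ‖x ω‖ ^ 2) μ := by
    apply Integrable.mono' ((integrable_const (1 : ℝ)).add hint4) hmx2.aestronglyMeasurable
    filter_upwards with ω
    simp only [Pi.add_apply]
    rw [Real.norm_eq_abs, abs_of_nonneg (by positivity)]
    nlinarith [sq_nonneg (‖x ω‖ ^ 2 - 1), sq_nonneg (‖x ω‖)]
  have hx1int : Integrable (fun ω => ‖x ω‖) μ := by
    apply Integrable.mono' ((integrable_const (1 : ℝ)).add hint4) hmx.norm.aestronglyMeasurable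
    filter_upwards with ω
    simp only [Pi.add_apply]
    rw [Real.norm_eq_abs, abs_of_nonneg (norm_nonneg _)]
    rcases le_total (‖x ω‖) 1 with h | h
    · linarith [pow_nonneg (norm_nonneg (x ω)) 4]
    · linarith [le_self_pow₀ h (by norm_num : (4 : ℕ) ≠ 0)]
  have hq_meas : Measurable fun ω => ⟪u, x ω⟫ ^ 2 :=
    (measurable_const.inner hmx).pow_const 2
  have hq_int : Integrable (fun ω => ⟪u, x ω⟫ ^ 2) μ := by
    apply Integrable.mono' (hx2int.const_mul (‖u‖ ^ 2)) hq_meas.aestronglyMeasurable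
    filter_upwards with ω
    have hcs := abs_real_inner_le_norm u (x ω)
    rw [Real.norm_eq_abs, abs_of_nonneg (sq_nonneg _)]
    nlinarith [abs_nonneg ⟪u, x ω⟫, norm_nonneg u, norm_nonneg (x ω), sq_abs ⟪u, x ω⟫]
  -- second moment of the projection
  have hEuu : ∫ ω, ⟪u, x ω⟫ ^ 2 ∂μ = ‖u‖ ^ 2 := by
    have h := hiso u u
    rw [real_inner_self_eq_norm_sq] at h
    rw [← h]
    congr 1; funext ω; rw [sq, real_inner_comm]
  -- c ≥ 1
  have hc1 : 1 ≤ c := by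
    have hle : ∫ ω, ⟪u, x ω⟫ ^ 2 ∂μ ≤ ∫ ω, (1 + ‖x ω‖ ^ 4) / 2 * ‖u‖ ^ 2 ∂μ := by
      apply integral_mono hq_int ((((integrable_const (1:ℝ)).add hint4).div_const 2).mul_const _)
      intro ω
      show ⟪u, x ω⟫ ^ 2 ≤ (1 + ‖x ω‖ ^ 4) / 2 * ‖u‖ ^ 2
      have hcs := abs_real_inner_le_norm u (x ω)
      have h4 : ‖x ω‖ ^ 2 ≤ (1 + ‖x ω‖ ^ 4) / 2 := by nlinarith [sq_nonneg (‖x ω‖ ^ 2 - 1)]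
      nlinarith [abs_nonneg ⟪u, x ω⟫, norm_nonneg u, norm_nonneg (x ω), sq_abs ⟪u, x ω⟫,
        sq_nonneg (‖x ω‖ * ‖u‖)]
    rw [hEuu] at hle
    have hrhs : ∫ ω, (1 + ‖x ω‖ ^ 4) / 2 * ‖u‖ ^ 2 ∂μ = (1 + c) / 2 * ‖u‖ ^ 2 := by
      rw [integral_mul_const, integral_div, integral_add (integrable_const 1) hint4,
        integral_const]
      simp [hc]
    rw [hrhs] at hle
    nlinarith [pow_pos hnu 2]
  have hcpos : (0:ℝ) < c := by linarith
  have hc0 : c ≠ 0 := hcpos.ne'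
  have hlogpos : 0 < Real.log (8 * c) := Real.log_pos (by linarith)
  have hΔx : 0 < Δx := by rw [hΔxdef]; exact mul_pos hσx hlogpos
  -- the good event
  set A : Set Ω := {ω | ‖x ω‖ ≤ Δx} with hA
  have hAmeas : MeasurableSet A := measurableSet_le hmx.norm measurable_const
  -- integrands
  set f' : Ω → EuclideanSpace ℝ (Fin d) :=
    fun ω => (F (x ω) (⟪x ω, θ'⟫ - ⟪x ω, θs⟫) - τ) • x ω with hf'def
  set f'' : Ω → EuclideanSpace ℝ (Fin d) :=
    fun ω => (F (x ω) (⟪x ω, θ''⟫ - ⟪x ω, θs⟫) - τ) • x ω with hf''def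
  have hbnd : ∀ (v : EuclideanSpace ℝ (Fin d)) t, |F v t - τ| ≤ 1 := by
    intro v t
    have h := hF01 v t
    rw [abs_le]
    constructor <;> [linarith [h.1]; linarith [h.2]]
  have hf'int : Integrable f' μ := by
    apply Integrable.mono' hx1int (hmeasF θ')
    filter_upwards with ω
    show ‖(F (x ω) (⟪x ω, θ'⟫ - ⟪x ω, θs⟫) - τ) • x ω‖ ≤ ‖x ω‖
    rw [norm_smul, Real.norm_eq_abs]
    calc |F (x ω) (⟪x ω, θ'⟫ - ⟪x ω, θs⟫) - τ| * ‖x ω‖ ≤ 1 * ‖x ω‖ :=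
          mul_le_mul_of_nonneg_right (hbnd _ _) (norm_nonneg _)
      _ = ‖x ω‖ := one_mul _
  have hf''int : Integrable f'' μ := by
    apply Integrable.mono' hx1int (hmeasF θ'')
    filter_upwards with ω
    show ‖(F (x ω) (⟪x ω, θ''⟫ - ⟪x ω, θs⟫) - τ) • x ω‖ ≤ ‖x ω‖
    rw [norm_smul, Real.norm_eq_abs]
    calc |F (x ω) (⟪x ω, θ''⟫ - ⟪x ω, θs⟫) - τ| * ‖x ω‖ ≤ 1 * ‖x ω‖ :=
          mul_le_mul_of_nonneg_right (hbnd _ _) (norm_nonneg _)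
      _ = ‖x ω‖ := one_mul _
  -- pointwise key inequality
  have key : ∀ ω, A.indicator (fun ω => μτ * ⟪u, x ω⟫ ^ 2) ω ≤ ⟪u, f' ω - f'' ω⟫ := by
    intro ω
    set a := ⟪x ω, θ'⟫ - ⟪x ω, θs⟫ with ha
    set b := ⟪x ω, θ''⟫ - ⟪x ω, θs⟫ with hb
    have hinner : ⟪u, x ω⟫ = a - b := by
      rw [real_inner_comm, hu, inner_sub_right, ha, hb]; ring
    have hexp : ⟪u, f' ω - f'' ω⟫ = (F (x ω) a - F (x ω) b) * (a - b) := by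
      simp only [hf'def, hf''def, inner_sub_right, real_inner_smul_right, hinner]
      ring
    rw [hexp]
    by_cases hωA : ω ∈ A
    · rw [Set.indicator_of_mem hωA, hinner]
      -- bounds |a| ≤ Δτ, |b| ≤ Δτ
      have hxb : ‖x ω‖ ≤ Δx := hωA
      have haB : |a| ≤ Δτ := by
        have : a = ⟪x ω, θ' - θs⟫ := by rw [inner_sub_right]
        rw [this]
        calc |⟪x ω, θ' - θs⟫| ≤ ‖x ω‖ * ‖θ' - θs‖ := abs_real_inner_le_norm _ _
          _ ≤ Δx * (Δτ / Δx) := by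
              apply mul_le_mul hxb h1 (norm_nonneg _) hΔx.le
          _ = Δτ := by rw [mul_comm]; exact div_mul_cancel₀ _ hΔx.ne'
      have hbB : |b| ≤ Δτ := by
        have : b = ⟪x ω, θ'' - θs⟫ := by rw [inner_sub_right]
        rw [this]
        calc |⟪x ω, θ'' - θs⟫| ≤ ‖x ω‖ * ‖θ'' - θs‖ := abs_real_inner_le_norm _ _
          _ ≤ Δx * (Δτ / Δx) := by
              apply mul_le_mul hxb h2 (norm_nonneg _) hΔx.le
          _ = Δτ := by rw [mul_comm]; exact div_mul_cancel₀ _ hΔx.ne'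
      rw [abs_le] at haB hbB
      rcases le_total b a with hba | hab
      · have hsm := hFsm (x ω) b a hbB.1 hba haB.2
        nlinarith
      · have hsm := hFsm (x ω) a b haB.1 hab hbB.2
        nlinarith
    · rw [Set.indicator_of_notMem hωA]
      rcases le_total b a with hba | hab
      · have := hFmono (x ω) hba
        nlinarith
      · have := hFmono (x ω) hab
        nlinarith
  -- integrability of both sides of key
  have hg_int : Integrable (fun ω => ⟪u, f' ω - f'' ω⟫) μ := (hf'int.sub hf''int).const_inner u
  have hind_int : Integrable (A.indicator fun ω => μτ * ⟪u, x ω⟫ ^ 2) μ :=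
    (hq_int.const_mul μτ).indicator hAmeas
  have hmain : ∫ ω, A.indicator (fun ω => μτ * ⟪u, x ω⟫ ^ 2) ω ∂μ
      ≤ ∫ ω, ⟪u, f' ω - f'' ω⟫ ∂μ := integral_mono hind_int hg_int key
  -- compute LHS of hmain
  have hind_eq : ∫ ω, A.indicator (fun ω => μτ * ⟪u, x ω⟫ ^ 2) ω ∂μ
      = μτ * ∫ ω in A, ⟪u, x ω⟫ ^ 2 ∂μ := by
    rw [integral_indicator hAmeas, integral_const_mul]
  -- tail bound : ∫_{Aᶜ} ⟪u,x⟫² ≤ ‖u‖²/2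
  have hμAc : (μ Aᶜ).toReal ≤ 1 / (4 * c) := by
    have hAc : Aᶜ = {ω | Δx < ‖x ω‖} := by
      ext ω; simp [hA, not_le]
    have ht := htail Δx hΔx.le
    rw [← hAc] at ht
    have hexp : 2 * Real.exp (-Δx / σx) = 1 / (4 * c) := by
      have h8c : (0:ℝ) < 8 * c := by linarith
      have : -Δx / σx = -Real.log (8 * c) := by
        rw [hΔxdef, mul_comm, neg_div, mul_div_assoc, div_self hσx.ne', mul_one]
      rw [this, Real.exp_neg, Real.exp_log h8c]
      field_simp
      ring
    rw [hexp] at ht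
    exact ENNReal.toReal_le_of_le_ofReal (one_div_nonneg.mpr (by linarith)) ht
  have hx2Ac : ∫ ω in Aᶜ, ‖x ω‖ ^ 2 ∂μ ≤ 1 / 2 := by
    have step1 : ∫ ω in Aᶜ, ‖x ω‖ ^ 2 ∂μ
        ≤ ∫ ω in Aᶜ, (1 / (4 * c) * ‖x ω‖ ^ 4 + c) ∂μ := by
      apply setIntegral_mono_on hx2int.integrableOn
        (((hint4.const_mul _).add (integrable_const c)).integrableOn) hAmeas.compl
      intro ω _
      have h4c : (0:ℝ) < 4 * c := by linarith
      have hineq : 4 * c * ‖x ω‖ ^ 2 ≤ ‖x ω‖ ^ 4 + 4 * c * c := by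
        nlinarith [sq_nonneg (‖x ω‖ ^ 2 - 2 * c)]
      calc ‖x ω‖ ^ 2 = 4 * c * ‖x ω‖ ^ 2 / (4 * c) := by field_simp
        _ ≤ (‖x ω‖ ^ 4 + 4 * c * c) / (4 * c) := (div_le_div_iff_of_pos_right h4c).mpr hineq
        _ = 1 / (4 * c) * ‖x ω‖ ^ 4 + c := by field_simp
    have step2 : ∫ ω in Aᶜ, (1 / (4 * c) * ‖x ω‖ ^ 4 + c) ∂μ
        = 1 / (4 * c) * ∫ ω in Aᶜ, ‖x ω‖ ^ 4 ∂μ + c * (μ Aᶜ).toReal := by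
      rw [integral_add ((hint4.const_mul _).integrableOn) (integrable_const c).integrableOn,
        integral_const_mul, setIntegral_const, smul_eq_mul, measureReal_def]
      ring
    have step3 : ∫ ω in Aᶜ, ‖x ω‖ ^ 4 ∂μ ≤ c := by
      rw [hc]
      apply setIntegral_le_integral hint4
      filter_upwards with ω
      positivity
    calc ∫ ω in Aᶜ, ‖x ω‖ ^ 2 ∂μ ≤ 1 / (4 * c) * ∫ ω in Aᶜ, ‖x ω‖ ^ 4 ∂μ + c * (μ Aᶜ).toReal :=
          by rw [← step2]; exact step1
      _ ≤ 1 / (4 * c) * c + c * (1 / (4 * c)) := by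
          apply add_le_add
          · exact mul_le_mul_of_nonneg_left step3 (one_div_nonneg.mpr (by linarith))
          · exact mul_le_mul_of_nonneg_left hμAc hcpos.le
      _ = 1 / 2 := by field_simp; ring
  have hqAc : ∫ ω in Aᶜ, ⟪u, x ω⟫ ^ 2 ∂μ ≤ ‖u‖ ^ 2 / 2 := by
    have step1 : ∫ ω in Aᶜ, ⟪u, x ω⟫ ^ 2 ∂μ ≤ ∫ ω in Aᶜ, ‖u‖ ^ 2 * ‖x ω‖ ^ 2 ∂μ := by
      apply setIntegral_mono_on hq_int.integrableOn (hx2int.const_mul _).integrableOn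
        hAmeas.compl
      intro ω _
      have hcs := abs_real_inner_le_norm u (x ω)
      nlinarith [abs_nonneg ⟪u, x ω⟫, norm_nonneg u, norm_nonneg (x ω), sq_abs ⟪u, x ω⟫]
    calc ∫ ω in Aᶜ, ⟪u, x ω⟫ ^ 2 ∂μ ≤ ∫ ω in Aᶜ, ‖u‖ ^ 2 * ‖x ω‖ ^ 2 ∂μ := step1
      _ = ‖u‖ ^ 2 * ∫ ω in Aᶜ, ‖x ω‖ ^ 2 ∂μ := integral_const_mul _ _
      _ ≤ ‖u‖ ^ 2 * (1 / 2) := mul_le_mul_of_nonneg_left hx2Ac (sq_nonneg _)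
      _ = ‖u‖ ^ 2 / 2 := by ring
  have hsplit : ∫ ω in A, ⟪u, x ω⟫ ^ 2 ∂μ + ∫ ω in Aᶜ, ⟪u, x ω⟫ ^ 2 ∂μ = ‖u‖ ^ 2 := by
    rw [integral_add_compl hAmeas hq_int, hEuu]
  have hqA : ‖u‖ ^ 2 / 2 ≤ ∫ ω in A, ⟪u, x ω⟫ ^ 2 ∂μ := by linarith
  -- assemble
  have hfinal : ⟪u, (∫ ω, f' ω ∂μ) - ∫ ω, f'' ω ∂μ⟫ = ∫ ω, ⟪u, f' ω - f'' ω⟫ ∂μ := by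
    rw [← integral_sub hf'int hf''int]
    exact (integral_inner (hf'int.sub hf''int) u).symm
  rw [hfinal]
  calc μτ / 2 * ‖u‖ ^ 2 = μτ * (‖u‖ ^ 2 / 2) := by ring
    _ ≤ μτ * ∫ ω in A, ⟪u, x ω⟫ ^ 2 ∂μ := mul_le_mul_of_nonneg_left hqA hμτ.le
    _ = ∫ ω, A.indicator (fun ω => μτ * ⟪u, x ω⟫ ^ 2) ω ∂μ := hind_eq.symm
    _ ≤ ∫ ω, ⟪u, f' ω - f'' ω⟫ ∂μ := hmain
end

section
/- Fix τ ∈ (0,1) and Δ_τ, μ_τ > 0. Let x, θ*, F_x, and ∇f_τ(θ) = E[(F_x(xᵀθ − xᵀθ*) − τ)x] be as in the online quantile regression model, with E[x xᵀ] = I_d, E[‖x‖⁴] < ∞, F_x(0) = τ, and F_x(t) − F_x(t′) ≥ μ_τ(t − t′) for −Δ_τ ≤ t′ ≤ t ≤ Δ_τ. Then for all θ ≠ θ*: ⟨θ − θ*, ∇f_τ(θ)⟩ ≥ (9·μ_τΔ_τ/(32·E[‖x‖⁴]))·‖θ − θ*‖ − μ_τΔ_τ². In particular, ⟨θ − θ*,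 ∇f_τ(θ)⟩ ≥ (9μ_τΔ_τ/(64E[‖x‖⁴]))·‖θ−θ*‖ whenever ‖θ − θ*‖ ≥ 64E[‖x‖⁴]Δ_τ/9. -/
open Real MeasureTheory RealInnerProductSpace

set_option maxHeartbeats 1000000 in
theorem stmt_17 {Ω : Type*} [MeasurableSpace Ω] (μ : Measure Ω) [IsProbabilityMeasure μ]
    (d : ℕ) (x : Ω → EuclideanSpace ℝ (Fin d)) (θs : EuclideanSpace ℝ (Fin d))
    (F : EuclideanSpace ℝ (Fin d) → ℝ → ℝ)
    (τ Δτ μτ : ℝ)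
    (hτ1 : 0 < τ) (hτ2 : τ < 1) (hΔτ : 0 < Δτ) (hμτ : 0 < μτ)
    (hmx : Measurable x)
    (hiso : ∀ u v : EuclideanSpace ℝ (Fin d), ∫ ω, ⟪x ω, u⟫ * ⟪x ω, v⟫ ∂μ = ⟪u, v⟫)
    (hint4 : Integrable (fun ω => ‖x ω‖ ^ 4) μ)
    (hF01 : ∀ v t, F v t ∈ Set.Icc (0 : ℝ) 1)
    (hFmono : ∀ v, Monotone (F v))
    (hF0 : ∀ v, F v 0 = τ)
    (hFsm : ∀ v, ∀ t' t : ℝ, -Δτ ≤ t' → t' ≤ t → t ≤ Δτ → μτ * (t - t') ≤ F v t - F v t')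
    (hmeasF : ∀ θ : EuclideanSpace ℝ (Fin d),
      AEStronglyMeasurable (fun ω => (F (x ω) (⟪x ω, θ⟫ - ⟪x ω, θs⟫) - τ) • x ω) μ)
    (θ : EuclideanSpace ℝ (Fin d)) (hθ : θ ≠ θs) :
    (9 * μτ * Δτ / (32 * ∫ ω, ‖x ω‖ ^ 4 ∂μ) * ‖θ - θs‖ - μτ * Δτ ^ 2 ≤
      ⟪θ - θs, ∫ ω, (F (x ω) (⟪x ω, θ⟫ - ⟪x ω, θs⟫) - τ) • x ω ∂μ⟫) ∧
    (64 * (∫ ω, ‖x ω‖ ^ 4 ∂μ) * Δτ / 9 ≤ ‖θ - θs‖ →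
      9 * μτ * Δτ / (64 * ∫ ω, ‖x ω‖ ^ 4 ∂μ) * ‖θ - θs‖ ≤
        ⟪θ - θs, ∫ ω, (F (x ω) (⟪x ω, θ⟫ - ⟪x ω, θs⟫) - τ) • x ω ∂μ⟫) := by
  classical
  -- dimension must be positive
  rcases Nat.eq_zero_or_pos d with hd | hd
  · exfalso; apply hθ; subst hd; ext i; exact i.elim0
  set g : EuclideanSpace ℝ (Fin d) := θ - θs with hg
  have hC : (0:ℝ) < ‖g‖ := by
    rw [hg, norm_pos_iff]; exact sub_ne_zero.mpr hθ
  set t : Ω → ℝ := fun ω => ⟪x ω, g⟫ with htdef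
  have ht_eq : ∀ ω, ⟪x ω, θ⟫ - ⟪x ω, θs⟫ = t ω := by
    intro ω; rw [htdef]; simp [hg, inner_sub_right]
  have mt : Measurable t := hmx.inner measurable_const
  have mnx : Measurable fun ω => ‖x ω‖ := hmx.norm
  -- integrability of powers of ‖x‖
  have hpoly : ∀ k : ℕ, k ≤ 4 → Integrable (fun ω => ‖x ω‖ ^ k) μ := by
    intro k hk
    refine Integrable.mono' (g := fun ω => ‖x ω‖ ^ 4 + 1)
      (by simpa using hint4.add (integrable_const 1))
      ((mnx.pow_const k).aestronglyMeasurable) (ae_of_all _ fun ω => ?_)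
    have h0 : (0:ℝ) ≤ ‖x ω‖ := norm_nonneg _
    show ‖‖x ω‖ ^ k‖ ≤ ‖x ω‖ ^ 4 + 1
    rw [Real.norm_of_nonneg (pow_nonneg h0 k)]
    rcases le_total (‖x ω‖) 1 with h | h
    · have := pow_le_one₀ h0 h (n := k)
      have h4 : (0:ℝ) ≤ ‖x ω‖ ^ 4 := by positivity
      linarith
    · have := pow_le_pow_right₀ h hk
      have h4 : (0:ℝ) ≤ 1 := zero_le_one
      linarith
  have int1 : Integrable (fun ω => ‖x ω‖) μ := by
    simpa using hpoly 1 (by norm_num)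
  have int2 : Integrable (fun ω => ‖x ω‖ ^ 2) μ := hpoly 2 (by norm_num)
  have int3 : Integrable (fun ω => ‖x ω‖ ^ 3) μ := hpoly 3 (by norm_num)
  have habs : ∀ ω, |t ω| ≤ ‖x ω‖ * ‖g‖ := fun ω => abs_real_inner_le_norm _ _
  have htnn : ∀ ω, (0:ℝ) ≤ |t ω| := fun ω => abs_nonneg _
  -- integrability facts
  have int_t : Integrable (fun ω => |t ω|) μ := by
    refine Integrable.mono' (g := fun ω => ‖x ω‖ * ‖g‖) (int1.mul_const ‖g‖)
      (mt.abs.aestronglyMeasurable) (ae_of_all _ fun ω => ?_)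
    show ‖|t ω|‖ ≤ ‖x ω‖ * ‖g‖
    rw [Real.norm_of_nonneg (htnn ω)]
    exact habs ω
  have int_tx : Integrable (fun ω => |t ω| * ‖x ω‖) μ := by
    refine Integrable.mono' (g := fun ω => ‖x ω‖ ^ 2 * ‖g‖) (int2.mul_const ‖g‖)
      ((mt.abs.mul mnx).aestronglyMeasurable) (ae_of_all _ fun ω => ?_)
    show ‖|t ω| * ‖x ω‖‖ ≤ ‖x ω‖ ^ 2 * ‖g‖
    rw [Real.norm_of_nonneg (by positivity)]
    calc |t ω| * ‖x ω‖ ≤ (‖x ω‖ * ‖g‖) * ‖x ω‖ :=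
          mul_le_mul_of_nonneg_right (habs ω) (norm_nonneg _)
      _ = ‖x ω‖ ^ 2 * ‖g‖ := by ring
  have int_tx2 : Integrable (fun ω => |t ω| * ‖x ω‖ ^ 2) μ := by
    refine Integrable.mono' (g := fun ω => ‖x ω‖ ^ 3 * ‖g‖) (int3.mul_const ‖g‖)
      ((mt.abs.mul (mnx.pow_const 2)).aestronglyMeasurable) (ae_of_all _ fun ω => ?_)
    show ‖|t ω| * ‖x ω‖ ^ 2‖ ≤ ‖x ω‖ ^ 3 * ‖g‖
    rw [Real.norm_of_nonneg (by positivity)]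
    calc |t ω| * ‖x ω‖ ^ 2 ≤ (‖x ω‖ * ‖g‖) * ‖x ω‖ ^ 2 :=
          mul_le_mul_of_nonneg_right (habs ω) (by positivity)
      _ = ‖x ω‖ ^ 3 * ‖g‖ := by ring
  have int_t2 : Integrable (fun ω => t ω * t ω) μ := by
    refine Integrable.mono' (g := fun ω => ‖x ω‖ ^ 2 * ‖g‖ ^ 2) (int2.mul_const (‖g‖^2))
      ((mt.mul mt).aestronglyMeasurable) (ae_of_all _ fun ω => ?_)
    show ‖t ω * t ω‖ ≤ ‖x ω‖ ^ 2 * ‖g‖ ^ 2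
    have hnn : ‖t ω * t ω‖ = |t ω| * |t ω| := by rw [norm_mul]; rfl
    rw [hnn]
    calc |t ω| * |t ω| ≤ (‖x ω‖ * ‖g‖) * (‖x ω‖ * ‖g‖) :=
          mul_le_mul (habs ω) (habs ω) (htnn ω) (by positivity)
      _ = ‖x ω‖ ^ 2 * ‖g‖ ^ 2 := by ring
  -- isotropy: second moment of t
  have hB : ∫ ω, t ω * t ω ∂μ = ‖g‖ ^ 2 := by
    have := hiso g g
    rwa [real_inner_self_eq_norm_sq] at this
  set S2 : ℝ := ∫ ω, ‖x ω‖ ^ 2 ∂μ with hS2def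
  set M : ℝ := ∫ ω, ‖x ω‖ ^ 4 ∂μ with hMdef
  -- 1 ≤ S2
  have h1S2 : 1 ≤ S2 := by
    set e : EuclideanSpace ℝ (Fin d) := EuclideanSpace.single ⟨0, hd⟩ (1:ℝ) with he
    have hee : (⟪e, e⟫ : ℝ) = 1 := by
      rw [real_inner_self_eq_norm_sq, he, EuclideanSpace.norm_single]; norm_num
    have hbound : ∀ ω, ⟪x ω, e⟫ * ⟪x ω, e⟫ ≤ ‖x ω‖ ^ 2 := by
      intro ω
      have h1 : |⟪x ω, e⟫| ≤ ‖x ω‖ * ‖e‖ := abs_real_inner_le_norm _ _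
      have h2 : ‖e‖ = 1 := by rw [he, EuclideanSpace.norm_single]; norm_num
      rw [h2, mul_one] at h1
      have := abs_le.mp h1
      nlinarith [this.1, this.2]
    have int_e : Integrable (fun ω => ⟪x ω, e⟫ * ⟪x ω, e⟫) μ := by
      refine Integrable.mono' (g := fun ω => ‖x ω‖ ^ 2) int2 ((hmx.inner measurable_const).mul
        (hmx.inner measurable_const)).aestronglyMeasurable (ae_of_all _ fun ω => ?_)
      show ‖⟪x ω, e⟫ * ⟪x ω, e⟫‖ ≤ ‖x ω‖ ^ 2
      rw [Real.norm_of_nonneg (mul_self_nonneg _)]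
      exact hbound ω
    have := integral_mono int_e int2 hbound
    rw [hiso e e, hee] at this
    exact this
  -- S2^2 ≤ M (Cauchy-Schwarz / variance)
  have hS2M : S2 ^ 2 ≤ M := by
    have h0 : 0 ≤ ∫ ω, (‖x ω‖ ^ 2 - S2) ^ 2 ∂μ := integral_nonneg fun ω => sq_nonneg _
    have hfun : (fun ω => (‖x ω‖ ^ 2 - S2) ^ 2)
        = fun ω => (‖x ω‖ ^ 4 - (2 * S2) * ‖x ω‖ ^ 2) + S2 ^ 2 := by
      funext ω; ring
    have i1 : Integrable (fun ω => ‖x ω‖ ^ 4 - 2 * S2 * ‖x ω‖ ^ 2) μ :=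
      hint4.sub (int2.const_mul _)
    rw [hfun, integral_add i1 (integrable_const _),
      integral_sub hint4 (int2.const_mul (2 * S2)), integral_const_mul, integral_const] at h0
    simp only [measure_univ, probReal_univ, ENNReal.toReal_one, smul_eq_mul, one_mul] at h0
    rw [← hMdef, ← hS2def] at h0
    nlinarith [h0]
  have hMpos : (0:ℝ) < M := by nlinarith
  have hM1 : 1 ≤ M := by nlinarith
  have hS2leM : S2 ≤ M := by nlinarith
  -- third moment bound
  have h3M : ∫ ω, ‖x ω‖ ^ 3 ∂μ ≤ M := by
    have hp : ∀ ω, ‖x ω‖ ^ 3 ≤ (‖x ω‖ ^ 2 + ‖x ω‖ ^ 4) / 2 := by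
      intro ω
      nlinarith [mul_nonneg (sq_nonneg (‖x ω‖)) (sq_nonneg (‖x ω‖ - 1)), norm_nonneg (x ω)]
    have iAdd : Integrable (fun ω => (‖x ω‖ ^ 2 + ‖x ω‖ ^ 4) / 2) μ :=
      (int2.add hint4).div_const 2
    have := integral_mono int3 iAdd hp
    rw [integral_div, integral_add int2 hint4] at this
    linarith
  set A : ℝ := ∫ ω, |t ω| ∂μ with hAdef
  have hAnn : 0 ≤ A := integral_nonneg fun ω => abs_nonneg _
  -- step: ‖g‖ ≤ ∫ |t|‖x‖
  have hP : ‖g‖ ≤ ∫ ω, |t ω| * ‖x ω‖ ∂μ := by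
    have hp : ∀ ω, t ω * t ω ≤ (|t ω| * ‖x ω‖) * ‖g‖ := by
      intro ω
      have h1 : t ω * t ω = |t ω| * |t ω| := (abs_mul_abs_self _).symm
      rw [h1, mul_assoc]
      exact mul_le_mul_of_nonneg_left (habs ω) (htnn ω)
    have := integral_mono int_t2 (int_tx.mul_const _) hp
    rw [hB, integral_mul_const] at this
    nlinarith [this]
  -- Cauchy-Schwarz: ∫|t|‖x‖ ≤ sqrt(∫|t|) * sqrt(∫ |t|‖x‖²)
  have hCS : ∫ ω, |t ω| * ‖x ω‖ ∂μ ≤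
      Real.sqrt A * Real.sqrt (∫ ω, |t ω| * ‖x ω‖ ^ 2 ∂μ) := by
    have hconj : Real.HolderConjugate 2 2 := Real.holderConjugate_iff.mpr ⟨one_lt_two, by norm_num⟩
    have hmf : AEStronglyMeasurable (fun ω => Real.sqrt |t ω|) μ :=
      (mt.abs.sqrt).aestronglyMeasurable
    have hmg : AEStronglyMeasurable (fun ω => Real.sqrt |t ω| * ‖x ω‖) μ :=
      ((mt.abs.sqrt).mul mnx).aestronglyMeasurable
    have hsq_f : (fun ω => (Real.sqrt |t ω|) ^ 2) = fun ω => |t ω| := by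
      funext ω; exact Real.sq_sqrt (htnn ω)
    have hsq_g : (fun ω => (Real.sqrt |t ω| * ‖x ω‖) ^ 2) = fun ω => |t ω| * ‖x ω‖ ^ 2 := by
      funext ω; rw [mul_pow, Real.sq_sqrt (htnn ω)]
    have hLf : MemLp (fun ω => Real.sqrt |t ω|) (ENNReal.ofReal 2) μ := by
      rw [show ENNReal.ofReal (2:ℝ) = 2 by norm_num]
      exact (memLp_two_iff_integrable_sq hmf).2 (by rw [hsq_f]; exact int_t)
    have hLg : MemLp (fun ω => Real.sqrt |t ω| * ‖x ω‖) (ENNReal.ofReal 2) μ := by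
      rw [show ENNReal.ofReal (2:ℝ) = 2 by norm_num]
      exact (memLp_two_iff_integrable_sq hmg).2 (by rw [hsq_g]; exact int_tx2)
    have h := integral_mul_le_Lp_mul_Lq_of_nonneg hconj
      (ae_of_all _ fun ω => Real.sqrt_nonneg _)
      (ae_of_all _ fun ω => mul_nonneg (Real.sqrt_nonneg _) (norm_nonneg _)) hLf hLg
    have hleft : (∫ a, Real.sqrt |t a| * (Real.sqrt |t a| * ‖x a‖) ∂μ)
        = ∫ ω, |t ω| * ‖x ω‖ ∂μ := by
      congr 1; funext ω
      rw [← mul_assoc, Real.mul_self_sqrt (htnn ω)]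
    have hrf : (∫ a, Real.sqrt |t a| ^ (2:ℝ) ∂μ) = A := by
      rw [hAdef]; congr 1; funext ω
      rw [show ((2:ℝ) = ((2:ℕ):ℝ)) by norm_num, Real.rpow_natCast]
      exact Real.sq_sqrt (htnn ω)
    have hrg : (∫ a, (Real.sqrt |t a| * ‖x a‖) ^ (2:ℝ) ∂μ) = ∫ ω, |t ω| * ‖x ω‖ ^ 2 ∂μ := by
      congr 1; funext ω
      rw [show ((2:ℝ) = ((2:ℕ):ℝ)) by norm_num, Real.rpow_natCast, mul_pow,
        Real.sq_sqrt (htnn ω)]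
    rw [hleft, hrf, hrg] at h
    calc ∫ ω, |t ω| * ‖x ω‖ ∂μ ≤ A ^ (1/2:ℝ) * (∫ ω, |t ω| * ‖x ω‖ ^ 2 ∂μ) ^ (1/2:ℝ) := h
      _ = Real.sqrt A * Real.sqrt (∫ ω, |t ω| * ‖x ω‖ ^ 2 ∂μ) := by
          rw [← Real.sqrt_eq_rpow, ← Real.sqrt_eq_rpow]
  -- ∫ |t|‖x‖² ≤ ‖g‖ * M
  have hupper : ∫ ω, |t ω| * ‖x ω‖ ^ 2 ∂μ ≤ ‖g‖ * M := by
    have hp : ∀ ω, |t ω| * ‖x ω‖ ^ 2 ≤ ‖g‖ * ‖x ω‖ ^ 3 := by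
      intro ω
      calc |t ω| * ‖x ω‖ ^ 2 ≤ (‖x ω‖ * ‖g‖) * ‖x ω‖ ^ 2 :=
            mul_le_mul_of_nonneg_right (habs ω) (by positivity)
        _ = ‖g‖ * ‖x ω‖ ^ 3 := by ring
    have := integral_mono int_tx2 (int3.const_mul _) hp
    rw [integral_const_mul] at this
    calc ∫ ω, |t ω| * ‖x ω‖ ^ 2 ∂μ ≤ ‖g‖ * ∫ ω, ‖x ω‖ ^ 3 ∂μ := this
      _ ≤ ‖g‖ * M := mul_le_mul_of_nonneg_left h3M hC.le
  -- anti-concentration: A ≥ ‖g‖ / M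
  have hanti : ‖g‖ ≤ A * M := by
    have hint_tx2_nn : 0 ≤ ∫ ω, |t ω| * ‖x ω‖ ^ 2 ∂μ :=
      integral_nonneg fun ω => by positivity
    have h1 : ‖g‖ ≤ Real.sqrt A * Real.sqrt (‖g‖ * M) := by
      refine le_trans (le_trans hP hCS) ?_
      exact mul_le_mul_of_nonneg_left (Real.sqrt_le_sqrt hupper) (Real.sqrt_nonneg _)
    have h2 : Real.sqrt A * Real.sqrt (‖g‖ * M) = Real.sqrt (A * (‖g‖ * M)) :=
      (Real.sqrt_mul hAnn _).symm
    rw [h2] at h1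
    have h3 : ‖g‖ ^ 2 ≤ A * (‖g‖ * M) := by
      have := Real.sq_sqrt (mul_nonneg hAnn (mul_nonneg hC.le hMpos.le))
      nlinarith [Real.sqrt_nonneg (A * (‖g‖ * M))]
    nlinarith [h3]
  -- pointwise gradient bound
  have hptw : ∀ ω, μτ * Δτ * |t ω| - μτ * Δτ ^ 2 ≤ (F (x ω) (t ω) - τ) * t ω := by
    intro ω
    set v := x ω
    set s := t ω with hsdef
    rcases le_or_gt Δτ s with h | h
    · have h1 := hFsm v 0 Δτ (by linarith) hΔτ.le le_rfl
      rw [hF0] at h1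
      have h2 : F v Δτ ≤ F v s := hFmono v h
      have habs' : |s| = s := abs_of_nonneg (by linarith)
      rw [habs']
      nlinarith
    rcases le_or_gt s (-Δτ) with h' | h'
    · have h1 := hFsm v (-Δτ) 0 le_rfl (by linarith) hΔτ.le
      rw [hF0] at h1
      have h2 : F v s ≤ F v (-Δτ) := hFmono v h'
      have habs' : |s| = -s := abs_of_nonpos (by nlinarith)
      rw [habs']
      nlinarith
    · rcases le_or_gt 0 s with hs | hs
      · have h1 := hFsm v 0 s (by linarith) hs h.le
        rw [hF0] at h1
        have habs' : |s| = s := abs_of_nonneg hs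
        rw [habs']
        nlinarith [mul_le_mul_of_nonneg_right h1 hs, mul_pos hμτ hΔτ,
          mul_nonneg hμτ.le (mul_nonneg hs hs)]
      · have h1 := hFsm v s 0 h'.le hs.le hΔτ.le
        rw [hF0] at h1
        have habs' : |s| = -s := abs_of_nonpos hs.le
        rw [habs']
        nlinarith [mul_le_mul_of_nonneg_right h1 (neg_nonneg.mpr hs.le), mul_pos hμτ hΔτ,
          mul_nonneg hμτ.le (mul_nonneg (neg_nonneg.mpr hs.le) (neg_nonneg.mpr hs.le))]
  -- bound on |F - τ|
  have hFb : ∀ ω, |F (x ω) (t ω) - τ| ≤ 1 := by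
    intro ω
    have := hF01 (x ω) (t ω)
    rw [Set.mem_Icc] at this
    rw [abs_le]
    constructor <;> linarith [this.1, this.2]
  -- rewrite the integrand
  have hfun_eq : (fun ω => (F (x ω) (⟪x ω, θ⟫ - ⟪x ω, θs⟫) - τ) • x ω)
      = fun ω => (F (x ω) (t ω) - τ) • x ω := by
    funext ω; rw [ht_eq ω]
  have intvec : Integrable (fun ω => (F (x ω) (t ω) - τ) • x ω) μ := by
    refine Integrable.mono' (g := fun ω => ‖x ω‖) int1 (hfun_eq ▸ hmeasF θ)
      (ae_of_all _ fun ω => ?_)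
    show ‖(F (x ω) (t ω) - τ) • x ω‖ ≤ ‖x ω‖
    rw [norm_smul]
    calc ‖F (x ω) (t ω) - τ‖ * ‖x ω‖ ≤ 1 * ‖x ω‖ :=
          mul_le_mul_of_nonneg_right (hFb ω) (norm_nonneg _)
      _ = ‖x ω‖ := one_mul _
  have int_phit : Integrable (fun ω => (F (x ω) (t ω) - τ) * t ω) μ := by
    have hm : AEStronglyMeasurable (fun ω => (F (x ω) (t ω) - τ) * t ω) μ := by
      have h1 : AEStronglyMeasurable (fun ω => ⟪g, (F (x ω) (t ω) - τ) • x ω⟫) μ :=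
        AEStronglyMeasurable.inner aestronglyMeasurable_const (hfun_eq ▸ hmeasF θ)
      refine h1.congr (ae_of_all _ fun ω => ?_)
      show ⟪g, (F (x ω) (t ω) - τ) • x ω⟫ = (F (x ω) (t ω) - τ) * t ω
      rw [real_inner_smul_right, real_inner_comm]
    refine Integrable.mono' (g := fun ω => ‖x ω‖ * ‖g‖) (int1.mul_const ‖g‖) hm
      (ae_of_all _ fun ω => ?_)
    show ‖(F (x ω) (t ω) - τ) * t ω‖ ≤ ‖x ω‖ * ‖g‖
    rw [norm_mul]
    calc ‖F (x ω) (t ω) - τ‖ * ‖t ω‖ ≤ 1 * ‖t ω‖ :=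
          mul_le_mul_of_nonneg_right (hFb ω) (norm_nonneg _)
      _ = |t ω| := by rw [one_mul]; rfl
      _ ≤ ‖x ω‖ * ‖g‖ := habs ω
  -- the inner product equals the integral of (F - τ) * t
  have hinner : ⟪θ - θs, ∫ ω, (F (x ω) (⟪x ω, θ⟫ - ⟪x ω, θs⟫) - τ) • x ω ∂μ⟫
      = ∫ ω, (F (x ω) (t ω) - τ) * t ω ∂μ := by
    rw [hfun_eq, ← hg, ← integral_inner intvec g]
    congr 1; funext ω
    rw [real_inner_smul_right, real_inner_comm]
  -- lower bound on the integral
  have hlow : μτ * Δτ * A - μτ * Δτ ^ 2 ≤ ∫ ω, (F (x ω) (t ω) - τ) * t ω ∂μ := by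
    have hintl : Integrable (fun ω => μτ * Δτ * |t ω| - μτ * Δτ ^ 2) μ :=
      (int_t.const_mul _).sub (integrable_const _)
    have := integral_mono hintl int_phit hptw
    rw [integral_sub (int_t.const_mul _) (integrable_const _), integral_const_mul,
      integral_const] at this
    simpa [measure_univ, hAdef] using this
  have main1 : 9 * μτ * Δτ / (32 * M) * ‖g‖ - μτ * Δτ ^ 2 ≤
      ⟪θ - θs, ∫ ω, (F (x ω) (⟪x ω, θ⟫ - ⟪x ω, θs⟫) - τ) • x ω ∂μ⟫ := by
    rw [hinner]
    have key1 : 9 * μτ * Δτ / (32 * M) * ‖g‖ ≤ μτ * Δτ * A := by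
      have h32 : (0:ℝ) < 32 * M := by linarith
      rw [div_mul_eq_mul_div, div_le_iff₀ h32]
      have h1 : μτ * Δτ * ‖g‖ ≤ μτ * Δτ * (A * M) :=
        mul_le_mul_of_nonneg_left hanti (mul_pos hμτ hΔτ).le
      nlinarith [mul_pos hμτ hΔτ, hC, mul_nonneg (mul_nonneg hμτ.le hΔτ.le) (mul_nonneg hAnn hMpos.le)]
    linarith
  refine ⟨main1, ?_⟩
  intro h64
  have h2 : 9 * μτ * Δτ / (64 * M) * ‖g‖ ≤ 9 * μτ * Δτ / (32 * M) * ‖g‖ - μτ * Δτ ^ 2 := by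
    have hd1 : 9 * μτ * Δτ / (32 * M) * ‖g‖ - 9 * μτ * Δτ / (64 * M) * ‖g‖
        = 9 * μτ * Δτ / (64 * M) * ‖g‖ := by
      field_simp; ring
    have hd2 : μτ * Δτ ^ 2 ≤ 9 * μτ * Δτ / (64 * M) * ‖g‖ := by
      have h64p : (0:ℝ) < 64 * M := by linarith
      rw [div_mul_eq_mul_div, le_div_iff₀ h64p]
      nlinarith [mul_le_mul_of_nonneg_left h64 (mul_pos hμτ hΔτ).le]
    linarith
  exact le_trans h2 main1
end

section
/- Let θ, θ′ ∈ ℝ, θ′ < θ < θ′ + α/4 for some α > 0, let X be a real random variable with CDF F, and suppose F(θ) − F(θ′) ≥ μ(θ − θ′) for some μ > 0. Consider the coupled one-step recursive quantile updates T(ϑ) = ϑ − α(1{X ≤ ϑ} − τ). Then the Wasserstein-1 distance between the laws of T(θ) and T(θ′) satisfies W₁(L(T(θ)), L(T(θ′))) ≥ (1 + αμ/4)·(θ − θ′). -/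
open MeasureTheory

set_option maxHeartbeats 1000000

private lemma cdf_step {Ω : Type*} [MeasurableSpace Ω] (μ : Measure Ω) [IsProbabilityMeasure μ]
    (X : Ω → ℝ) (α τ ϑ t : ℝ) (hα : 0 < α) :
    (μ {ω | ϑ - α * ((if X ω ≤ ϑ then (1 : ℝ) else 0) - τ) ≤ t}).toReal =
    if ϑ + α * τ ≤ t then 1 else if ϑ - α * (1 - τ) ≤ t then (μ {ω | X ω ≤ ϑ}).toReal else 0 := by
  split_ifs with hc4 hc2
  · have h : {ω | ϑ - α * ((if X ω ≤ ϑ then (1 : ℝ) else 0) - τ) ≤ t} = Set.univ := by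
      ext ω
      simp only [Set.mem_setOf_eq, Set.mem_univ, iff_true]
      split_ifs <;> linarith
    rw [h]; simp
  · have h : {ω | ϑ - α * ((if X ω ≤ ϑ then (1 : ℝ) else 0) - τ) ≤ t} = {ω | X ω ≤ ϑ} := by
      ext ω
      simp only [Set.mem_setOf_eq]
      constructor
      · intro h
        by_contra hc
        rw [if_neg hc] at h
        apply hc4; linarith
      · intro h
        rw [if_pos h]; linarith
    rw [h]
  · have h : {ω | ϑ - α * ((if X ω ≤ ϑ then (1 : ℝ) else 0) - τ) ≤ t} = ∅ := by
      ext ω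
      simp only [Set.mem_setOf_eq, Set.mem_empty_iff_false, iff_false]
      split_ifs with h
      · intro hh; apply hc2; linarith
      · intro hh; apply hc4; linarith
    rw [h]; simp

theorem stmt_18 {Ω : Type*} [MeasurableSpace Ω] (μ : Measure Ω) [IsProbabilityMeasure μ]
    (X : Ω → ℝ) (hX : Measurable X) (α τ μc θ θ' : ℝ)
    (hα : 0 < α) (hμc : 0 < μc)
    (h1 : θ' < θ) (h2 : θ < θ' + α / 4)
    (hF : μc * (θ - θ') ≤ (μ {ω | X ω ≤ θ}).toReal - (μ {ω | X ω ≤ θ'}).toReal) :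
    (1 + α * μc / 4) * (θ - θ') ≤
      ∫ t : ℝ,
        |(μ {ω | θ - α * ((if X ω ≤ θ then (1 : ℝ) else 0) - τ) ≤ t}).toReal -
          (μ {ω | θ' - α * ((if X ω ≤ θ' then (1 : ℝ) else 0) - τ) ≤ t}).toReal| := by
  set a := (μ {ω | X ω ≤ θ}).toReal with ha
  set b := (μ {ω | X ω ≤ θ'}).toReal with hb
  have hb0 : 0 ≤ b := ENNReal.toReal_nonneg
  have ha1 : a ≤ 1 := by
    have h := prob_le_one (μ := μ) (s := {ω | X ω ≤ θ})
    have := ENNReal.toReal_mono ENNReal.one_ne_top h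
    simpa using this
  have hba : b ≤ a := by nlinarith
  set c1 := θ' - α * (1 - τ) with hc1
  set c2 := θ - α * (1 - τ) with hc2
  set c3 := θ' + α * τ with hc3
  set c4 := θ + α * τ with hc4
  have h12 : c1 < c2 := by simp only [hc1, hc2]; linarith
  have h23 : c2 < c3 := by simp only [hc2, hc3]; linarith
  have h34 : c3 < c4 := by simp only [hc3, hc4]; linarith
  have hfun : (fun t : ℝ =>
      |(μ {ω | θ - α * ((if X ω ≤ θ then (1 : ℝ) else 0) - τ) ≤ t}).toReal -
        (μ {ω | θ' - α * ((if X ω ≤ θ' then (1 : ℝ) else 0) - τ) ≤ t}).toReal|) =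
      fun t : ℝ =>
        (Set.Ico c1 c2).indicator (fun _ => b) t +
        ((Set.Ico c2 c3).indicator (fun _ => a - b) t +
         (Set.Ico c3 c4).indicator (fun _ => 1 - a) t) := by
    funext t
    rw [cdf_step μ X α τ θ t hα, cdf_step μ X α τ θ' t hα]
    rw [show θ + α * τ = c4 from rfl, show θ - α * (1 - τ) = c2 from rfl,
      show θ' + α * τ = c3 from rfl, show θ' - α * (1 - τ) = c1 from rfl, ← ha, ← hb]
    have nm : ∀ u v : ℝ, ¬ (u ≤ t ∧ t < v) → t ∉ Set.Ico u v := by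
      intro u v h hm; exact h (Set.mem_Ico.1 hm)
    rcases lt_or_ge t c1 with hA | hA
    · rw [if_neg (by linarith), if_neg (by linarith), if_neg (by linarith), if_neg (by linarith),
        Set.indicator_of_notMem (nm _ _ (by rintro ⟨u, v⟩; linarith)),
        Set.indicator_of_notMem (nm _ _ (by rintro ⟨u, v⟩; linarith)),
        Set.indicator_of_notMem (nm _ _ (by rintro ⟨u, v⟩; linarith))]
      simp
    · rcases lt_or_ge t c2 with hB | hB
      · rw [if_neg (by linarith), if_neg (by linarith), if_neg (by linarith), if_pos hA,
          Set.indicator_of_mem (Set.mem_Ico.2 ⟨hA, hB⟩),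
          Set.indicator_of_notMem (nm _ _ (by rintro ⟨u, v⟩; linarith)),
          Set.indicator_of_notMem (nm _ _ (by rintro ⟨u, v⟩; linarith))]
        rw [abs_of_nonpos (by linarith)]; ring
      · rcases lt_or_ge t c3 with hC | hC
        · rw [if_neg (by linarith), if_pos hB, if_neg (by linarith), if_pos (by linarith),
            Set.indicator_of_notMem (nm _ _ (by rintro ⟨u, v⟩; linarith)),
            Set.indicator_of_mem (Set.mem_Ico.2 ⟨hB, hC⟩),
            Set.indicator_of_notMem (nm _ _ (by rintro ⟨u, v⟩; linarith))]
          rw [abs_of_nonneg (by linarith)]; ring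
        · rcases lt_or_ge t c4 with hD | hD
          · rw [if_neg (by linarith), if_pos (by linarith), if_pos hC,
              Set.indicator_of_notMem (nm _ _ (by rintro ⟨u, v⟩; linarith)),
              Set.indicator_of_notMem (nm _ _ (by rintro ⟨u, v⟩; linarith)),
              Set.indicator_of_mem (Set.mem_Ico.2 ⟨hC, hD⟩)]
            rw [abs_of_nonpos (by linarith)]; ring
          · rw [if_pos hD, if_pos (by linarith),
              Set.indicator_of_notMem (nm _ _ (by rintro ⟨u, v⟩; linarith)),
              Set.indicator_of_notMem (nm _ _ (by rintro ⟨u, v⟩; linarith)),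
              Set.indicator_of_notMem (nm _ _ (by rintro ⟨u, v⟩; linarith))]
            simp
  rw [hfun]
  have hint : ∀ (u v : ℝ) (c : ℝ), Integrable ((Set.Ico u v).indicator (fun _ => c)) := by
    intro u v c
    rw [integrable_indicator_iff measurableSet_Ico]
    exact integrableOn_const (by rw [Real.volume_Ico]; exact ENNReal.ofReal_ne_top) (by simp)
  have hI2 := integral_add (μ := volume) (hint c1 c2 b) ((hint c2 c3 (a - b)).add (hint c3 c4 (1 - a)))
  have hI3 := integral_add (μ := volume) (hint c2 c3 (a - b)) (hint c3 c4 (1 - a))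
  simp only [Pi.add_apply] at hI2 hI3
  rw [hI2, hI3]
  rw [integral_indicator_const _ measurableSet_Ico, integral_indicator_const _ measurableSet_Ico,
    integral_indicator_const _ measurableSet_Ico]
  rw [measureReal_def, measureReal_def, measureReal_def, Real.volume_Ico, Real.volume_Ico, Real.volume_Ico]
  rw [ENNReal.toReal_ofReal (by linarith), ENNReal.toReal_ofReal (by linarith),
    ENNReal.toReal_ofReal (by linarith)]
  simp only [smul_eq_mul, hc1, hc2, hc3, hc4]
  nlinarith [mul_le_mul_of_nonneg_right hF (by linarith : (0:ℝ) ≤ α - 2*(θ - θ'))]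
end
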